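/- arXiv:2109.04308 — 5 statements merged into one kernel-verified Lean document; each statement's English description precedes it below -/
import Mathlib

section
/- Let N be a prime, let Γ = Γ0(N^2), and let β_N = [[N,0],[0,1]] ∈ GL_2(Q). Then the double coset Γ β_N Γ ⊂ GL_2(Q) is the disjoint union of the N pairwise distinct left cosets Γ β_N [[1,0],[iN^2,1]] for i = 0, 1, …, N−1. -/
open CongruenceSubgroup

private lemma mem_aux (N : ℕ) (M : Matrix (Fin 2) (Fin 2) ℤ) (hdet : M.det = 1)
    (hc : ((N : ℤ))^2 ∣ M 1 0) :
    M.map (fun x : ℤ => (x : ℚ)) ∈ {A | ∃ γ ∈ Gamma0 (N ^ 2),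
      A = ((γ : Matrix (Fin 2) (Fin 2) ℤ)).map (fun x : ℤ => (x : ℚ))} := by
  refine ⟨⟨M, hdet⟩, ?_, rfl⟩
  refine Gamma0_mem.2 ?_
  have : ((N ^ 2 : ℕ) : ℤ) ∣ M 1 0 := by push_cast; exact hc
  exact_mod_cast (ZMod.intCast_zmod_eq_zero_iff_dvd _ _).2 this

private lemma mem_extract (N : ℕ) (A : Matrix (Fin 2) (Fin 2) ℚ)
    (h : A ∈ {A | ∃ γ ∈ Gamma0 (N ^ 2),
      A = ((γ : Matrix (Fin 2) (Fin 2) ℤ)).map (fun x : ℤ => (x : ℚ))}) :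
    ∃ M : Matrix (Fin 2) (Fin 2) ℤ, M.det = 1 ∧ ((N : ℤ))^2 ∣ M 1 0 ∧
      A = M.map (fun x : ℤ => (x : ℚ)) := by
  obtain ⟨γ, hγ, rfl⟩ := h
  refine ⟨γ, γ.2, ?_, rfl⟩
  rw [Gamma0_mem] at hγ
  have := (ZMod.intCast_zmod_eq_zero_iff_dvd (γ.1 1 0) (N^2)).1 (by exact_mod_cast hγ)
  exact_mod_cast this

private lemma disj_core (N : ℕ) (hN : N.Prime) (i j : Fin N) (hij : i ≠ j)
    (M₁ M₂ : Matrix (Fin 2) (Fin 2) ℤ) (h1 : M₁.det = 1)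
    (hc₁ : ((N:ℤ))^2 ∣ M₁ 1 0) (hc₂ : ((N:ℤ))^2 ∣ M₂ 1 0)
    (heq : M₁.map (fun x : ℤ => (x : ℚ)) * !![(N:ℚ),0;(i:ℚ)*(N:ℚ)^2,1]
         = M₂.map (fun x : ℤ => (x : ℚ)) * !![(N:ℚ),0;(j:ℚ)*(N:ℚ)^2,1]) : False := by
  have e11 : (M₁ 1 1 : ℚ) = (M₂ 1 1 : ℚ) := by
    have := congrFun (congrFun heq 1) 1
    simpa [Matrix.mul_apply, Fin.sum_univ_two] using this
  have e10 : (M₁ 1 0 : ℚ) * N + (M₁ 1 1) * ((i:ℕ):ℚ) * (N:ℚ)^2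
           = (M₂ 1 0 : ℚ) * N + (M₂ 1 1) * ((j:ℕ):ℚ) * (N:ℚ)^2 := by
    have := congrFun (congrFun heq 1) 0
    simp [Matrix.mul_apply, Fin.sum_univ_two] at this
    linarith [this]
  have hd : M₁ 1 1 = M₂ 1 1 := by exact_mod_cast e11
  have e10' : M₁ 1 0 * N + M₁ 1 1 * (i:ℤ) * (N:ℤ)^2
            = M₂ 1 0 * N + M₂ 1 1 * (j:ℤ) * (N:ℤ)^2 := by exact_mod_cast e10
  obtain ⟨e₁, he₁⟩ := hc₁
  obtain ⟨e₂, he₂⟩ := hc₂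
  have hNpos : (0:ℤ) < N := by exact_mod_cast hN.pos
  have key : M₁ 1 1 * ((i:ℤ) - (j:ℤ)) = N * (e₂ - e₁) := by
    have hN0 : (N:ℤ) ≠ 0 := hNpos.ne'
    have := e10'
    rw [he₁, he₂, hd] at this
    have h3 : (N:ℤ)^2 * (N * e₁ + M₂ 1 1 * (i:ℤ)) = (N:ℤ)^2 * (N * e₂ + M₂ 1 1 * (j:ℤ)) := by
      ring_nf; ring_nf at this; linarith
    have h4 := mul_left_cancel₀ (pow_ne_zero 2 hN0) h3
    rw [hd]; linarith
  have hnd : ¬ (N:ℤ) ∣ M₁ 1 1 := by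
    intro h
    have hbc : (N:ℤ) ∣ M₁ 1 0 := ⟨N * e₁, by rw [he₁]; ring⟩
    have : (N:ℤ) ∣ 1 := by
      have hdet : M₁ 0 0 * M₁ 1 1 - M₁ 0 1 * M₁ 1 0 = 1 := by
        rw [Matrix.det_fin_two] at h1; linarith
      rw [← hdet]
      exact dvd_sub (h.mul_left _) (hbc.mul_left _)
    exact hN.one_lt.ne' (by exact_mod_cast Int.eq_one_of_dvd_one (by norm_num) this)
  have hdvdij : (N:ℤ) ∣ ((i:ℤ) - (j:ℤ)) := by
    have : (N:ℤ) ∣ M₁ 1 1 * ((i:ℤ) - (j:ℤ)) := ⟨e₂ - e₁, key⟩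
    rcases (Int.Prime.dvd_mul' (by exact_mod_cast hN) this) with h | h
    · exact absurd h hnd
    · exact h
  have hi := i.2; have hj := j.2
  have : (i:ℤ) = (j:ℤ) := by
    have hi' : (i:ℤ) < N := by exact_mod_cast hi
    have hj' : (j:ℤ) < N := by exact_mod_cast hj
    have hi0 : (0:ℤ) ≤ (i:ℤ) := Int.natCast_nonneg _
    have hj0 : (0:ℤ) ≤ (j:ℤ) := Int.natCast_nonneg _
    have := Int.eq_zero_of_abs_lt_dvd hdvdij (by rw [abs_lt]; constructor <;> linarith)
    linarith
  exact hij (Fin.ext (by exact_mod_cast this))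

private lemma fwd_core (N : ℕ) (hN : N.Prime) (M : Matrix (Fin 2) (Fin 2) ℤ)
    (hdet : M.det = 1) (hc : ((N:ℤ))^2 ∣ M 1 0) :
    ∃ i : Fin N, ∃ G : Matrix (Fin 2) (Fin 2) ℤ, G.det = 1 ∧ ((N:ℤ))^2 ∣ G 1 0 ∧
      !![(N:ℚ),0;0,1] * M.map (fun x : ℤ => (x : ℚ))
        = G.map (fun x : ℤ => (x : ℚ)) * !![(N:ℚ),0;((i:ℕ):ℚ)*(N:ℚ)^2,1] := by
  haveI : Fact N.Prime := ⟨hN⟩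
  set a := M 0 0 with ha; set b := M 0 1 with hb; set c := M 1 0 with hcc; set d := M 1 1 with hdd
  obtain ⟨c', hc'⟩ := hc
  have hdet2 : a * d - b * c = 1 := by rw [Matrix.det_fin_two] at hdet; linarith
  have hnd : ¬ (N:ℤ) ∣ d := by
    intro h
    have : (N:ℤ) ∣ 1 := by
      rw [← hdet2]
      exact dvd_sub (h.mul_left _) ((dvd_trans ⟨N*c', by rw [hc']; ring⟩ dvd_rfl).mul_left _)
    exact hN.one_lt.ne' (by exact_mod_cast Int.eq_one_of_dvd_one (by norm_num) this)
  have hd0 : ((d : ZMod N)) ≠ 0 := by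
    rw [Ne, ZMod.intCast_zmod_eq_zero_iff_dvd]; exact hnd
  haveI : NeZero N := ⟨hN.ne_zero⟩
  set x : ZMod N := (c' : ZMod N) * (d : ZMod N)⁻¹ with hx
  refine ⟨⟨x.val, ZMod.val_lt x⟩, ?_⟩
  have hdvd : (N:ℤ) ∣ c' - d * (x.val : ℤ) := by
    rw [← ZMod.intCast_zmod_eq_zero_iff_dvd]
    push_cast
    rw [ZMod.natCast_val, ZMod.cast_id, hx]
    have hinv : (d : ZMod N) * (d : ZMod N)⁻¹ = 1 := mul_inv_cancel₀ hd0
    linear_combination (-(c' : ZMod N)) * hinv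
  obtain ⟨k, hk⟩ := hdvd
  refine ⟨!![a - b * (x.val : ℤ) * (N:ℤ)^2, (N:ℤ) * b; (N:ℤ) * (c' - d * (x.val : ℤ)), d],
    ?_, ?_, ?_⟩
  · rw [Matrix.det_fin_two_of]
    linear_combination hdet2 + b * hc'
  · have : (!![a - b * (x.val : ℤ) * (N:ℤ)^2, (N:ℤ) * b;
        (N:ℤ) * (c' - d * (x.val : ℤ)), d]) 1 0 = (N:ℤ) * (c' - d * (x.val : ℤ)) := by simp
    rw [this, hk]
    exact ⟨k, by ring⟩
  · have hcQ : (c : ℚ) = (N:ℚ)^2 * (c' : ℚ) := by exact_mod_cast congrArg (fun z : ℤ => (z:ℚ)) hc'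
    ext i' j'
    fin_cases i' <;> fin_cases j' <;>
      simp [Matrix.mul_apply, Fin.sum_univ_two, ← ha, ← hb, ← hcc, ← hdd] <;>
      push_cast <;> ring_nf <;> ring_nf at hcQ <;> linarith [hcQ]

/-- Let `N` be prime, `Γ = Γ₀(N²)` viewed as a set of matrices in `GL₂(ℚ)`, and
`β_N = [[N,0],[0,1]]`. Then the double coset `Γ β_N Γ` is the disjoint union of the `N`
pairwise distinct left cosets `Γ β_N [[1,0],[iN²,1]]` for `i = 0, 1, …, N-1`. -/
theorem gamma0_double_coset_decomposition_UN
    (N : ℕ) (hN : N.Prime)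
    (Γs : Set (Matrix (Fin 2) (Fin 2) ℚ))
    (hΓ : Γs = {A | ∃ γ ∈ Gamma0 (N ^ 2),
      A = ((γ : Matrix (Fin 2) (Fin 2) ℤ)).map (fun x : ℤ => (x : ℚ))})
    (β : Matrix (Fin 2) (Fin 2) ℚ) (hβ : β = !![(N : ℚ), 0; 0, 1])
    (rep : Fin N → Matrix (Fin 2) (Fin 2) ℚ)
    (hrep : ∀ i : Fin N, rep i = β * !![(1 : ℚ), 0; (i : ℚ) * (N : ℚ) ^ 2, 1]) :
    ({x | ∃ g₁ ∈ Γs, ∃ g₂ ∈ Γs, x = g₁ * β * g₂} =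
        ⋃ i : Fin N, {x | ∃ g ∈ Γs, x = g * rep i}) ∧
    ∀ i j : Fin N, i ≠ j →
      Disjoint {x | ∃ g ∈ Γs, x = g * rep i} {x | ∃ g ∈ Γs, x = g * rep j} := by

  have hrep' : ∀ i : Fin N, rep i = !![(N:ℚ),0;((i:ℕ):ℚ)*(N:ℚ)^2,1] := by
    intro i
    rw [hrep i, hβ]
    ext i' j'
    fin_cases i' <;> fin_cases j' <;>
      simp [Matrix.mul_apply, Fin.sum_univ_two]
  subst hΓ hβ
  constructor
  · ext x
    simp only [Set.mem_setOf_eq, Set.mem_iUnion]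
    constructor
    · rintro ⟨g₁, hg₁, g₂, hg₂, rfl⟩
      obtain ⟨M₁, hdet₁, hc₁, rfl⟩ := mem_extract N g₁ hg₁
      obtain ⟨M₂, hdet₂, hc₂, rfl⟩ := mem_extract N g₂ hg₂
      obtain ⟨i, G, hGdet, hGc, hGeq⟩ := fwd_core N hN M₂ hdet₂ hc₂
      refine ⟨i, (M₁ * G).map (fun x : ℤ => (x : ℚ)), mem_aux N _ ?_ ?_, ?_⟩
      · rw [Matrix.det_mul, hdet₁, hGdet, one_mul]
      · have : (M₁ * G) 1 0 = M₁ 1 0 * G 0 0 + M₁ 1 1 * G 1 0 := by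
          simp [Matrix.mul_apply, Fin.sum_univ_two]
        rw [this]
        exact dvd_add (hc₁.mul_right _) (hGc.mul_left _)
      · have hmap : ((M₁ * G).map (fun x : ℤ => (x : ℚ)))
            = M₁.map (fun x : ℤ => (x : ℚ)) * G.map (fun x : ℤ => (x : ℚ)) :=
          Matrix.map_mul (f := Int.castRingHom ℚ)
        rw [hrep' i, hmap, mul_assoc, mul_assoc, ← hGeq]
    · rintro ⟨i, g, hg, rfl⟩
      obtain ⟨M, hdet, hc, rfl⟩ := mem_extract N g hg
      refine ⟨_, hg, (!![(1:ℤ),0;((i:ℕ):ℤ)*(N:ℤ)^2,1]).map (fun x : ℤ => (x : ℚ)),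
        mem_aux N _ (by simp [Matrix.det_fin_two_of]) ?_, ?_⟩
      · have : (!![(1:ℤ),0;((i:ℕ):ℤ)*(N:ℤ)^2,1]) 1 0 = ((i:ℕ):ℤ)*(N:ℤ)^2 := by simp
        rw [this]; exact Dvd.intro_left _ rfl
      · rw [hrep i, ← mul_assoc]
        congr 1
        ext i' j'
        fin_cases i' <;> fin_cases j' <;> simp [Matrix.map_apply] <;> push_cast <;> ring
  · intro i j hij
    rw [Set.disjoint_left]
    rintro x ⟨g, hg, rfl⟩ ⟨g', hg', heq⟩
    obtain ⟨M₁, hdet₁, hc₁, rfl⟩ := mem_extract N g hg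
    obtain ⟨M₂, hdet₂, hc₂, rfl⟩ := mem_extract N g' hg'
    rw [hrep' i, hrep' j] at heq
    exact disj_core N hN i j hij M₁ M₂ hdet₁ hc₁ hc₂ heq
end

section
/- Let N be a prime. The N+1 points ∞, 0, 1/N, 2/N, …, (N−1)/N of P^1(Q) form a complete set of representatives for the orbits of Γ0(N^2) acting on P^1(Q) by Möbius transformations: they lie in pairwise distinct orbits and every element of P^1(Q) is Γ0(N^2)-equivalent to exactly one of them. In particular, Γ0(N^2) has exactly N+1 cusps. -/
open CongruenceSubgroup

private lemma aux_dvd_iff {n a b c d x y w2 u : ℤ}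
    (hdet : a * d - b * c = 1) (hc : n ∣ c) (hu : u * u = 1)
    (h2 : c * x + d * y = u * w2) : (n ∣ y ↔ n ∣ w2) := by
  have hcop : IsCoprime n d := by
    obtain ⟨e, he⟩ := hc
    exact ⟨-(b * e), a, by linear_combination hdet + b * he⟩
  constructor
  · intro hy
    have h : n ∣ u * w2 := by
      rw [← h2]; exact dvd_add (hc.mul_right x) (hy.mul_left d)
    have h' : n ∣ u * (u * w2) := h.mul_left u
    rwa [← mul_assoc, hu, one_mul] at h'
  · intro hw
    have h : n ∣ d * y := by
      have h' : d * y = u * w2 - c * x := by linarith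
      rw [h']; exact dvd_sub (hw.mul_left u) (hc.mul_right x)
    exact hcop.dvd_of_dvd_mul_left h

private lemma aux_prod {n a b c d x y w1 w2 u : ℤ}
    (hdet : a * d - b * c = 1) (hc : n ^ 2 ∣ c) (hu : u * u = 1)
    (h1 : a * x + b * y = u * w1) (h2 : c * x + d * y = u * w2)
    (hy : n ∣ y) : n ^ 2 ∣ (x * y - w1 * w2) := by
  obtain ⟨e, he⟩ := hc
  obtain ⟨t, ht⟩ := hy
  subst he ht
  have key : w1 * w2 = (a * x + b * (n * t)) * (n ^ 2 * e * x + d * (n * t)) := by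
    calc w1 * w2 = (u * u) * (w1 * w2) := by rw [hu, one_mul]
    _ = (u * w1) * (u * w2) := by ring
    _ = _ := by rw [← h1, ← h2]
  refine ⟨e * (-(a * x ^ 2) - 2 * b * x * (n * t)) + t ^ 2 * (-(b * d)), ?_⟩
  rw [key]
  linear_combination (-(n * t * x)) * hdet

/-- Identify points of `ℙ¹(ℚ)` with coprime integer vectors `(x, y)` up to sign, with the
Möbius action of `Γ₀(N²)` given by matrix action on vectors. For `N` prime, the `N + 1`
points `∞ = (1,0)`, `0 = (0,1)`, `1/N = (1,N)`, …, `(N-1)/N = (N-1,N)` form a complete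
set of representatives for the orbits of `Γ₀(N²)` on `ℙ¹(ℚ)`: every coprime pair is
equivalent to exactly one of them.  In particular `Γ₀(N²)` has exactly `N + 1` cusps. -/
theorem gamma0_cusp_representatives
    (N : ℕ) (hN : N.Prime)
    (Rel : ℤ × ℤ → ℤ × ℤ → Prop)
    (hRel : ∀ v w : ℤ × ℤ, Rel v w ↔
      ∃ γ ∈ Gamma0 (N ^ 2), ∃ u : ℤˣ,
        (γ : Matrix (Fin 2) (Fin 2) ℤ) 0 0 * v.1 +
          (γ : Matrix (Fin 2) (Fin 2) ℤ) 0 1 * v.2 = (u : ℤ) * w.1 ∧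
        (γ : Matrix (Fin 2) (Fin 2) ℤ) 1 0 * v.1 +
          (γ : Matrix (Fin 2) (Fin 2) ℤ) 1 1 * v.2 = (u : ℤ) * w.2)
    (rep : Fin (N + 1) → ℤ × ℤ)
    (hrep0 : rep 0 = (1, 0)) (hrep1 : rep 1 = (0, 1))
    (hrep : ∀ i : Fin (N + 1), 2 ≤ (i : ℕ) → rep i = (((i : ℕ) : ℤ) - 1, (N : ℤ))) :
    ∀ x y : ℤ, Int.gcd x y = 1 → ∃! i : Fin (N + 1), Rel (x, y) (rep i) := by
  intro x y hxy
  have hN2 : 2 ≤ N := hN.two_le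
  have hNZ : (2 : ℤ) ≤ (N : ℤ) := by exact_mod_cast hN2
  have hNpos : (0 : ℤ) < (N : ℤ) := by linarith
  have hNprime : Prime (N : ℤ) := Nat.prime_iff_prime_int.mp hN
  have hcop : IsCoprime x y := Int.isCoprime_iff_gcd_eq_one.mpr hxy
  have hone : ((1 : Fin (N + 1)) : ℕ) = 1 := by
    rw [Fin.val_one', Nat.mod_eq_of_lt (by omega)]
  -- helper to build Rel
  have mkRel : ∀ (a b c d : ℤ) (w : ℤ × ℤ), a * d - b * c = 1 → (N : ℤ) ^ 2 ∣ c →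
      a * x + b * y = w.1 → c * x + d * y = w.2 → Rel (x, y) w := by
    intro a b c d w hdet hc e1 e2
    rw [hRel]
    refine ⟨(⟨!![a, b; c, d], by simp [Matrix.det_fin_two_of]; linarith⟩ : Matrix.SpecialLinearGroup (Fin 2) ℤ), ?_, 1, ?_, ?_⟩
    · refine Gamma0_mem.mpr ?_
      have h : ((N ^ 2 : ℕ) : ℤ) ∣ c := by push_cast; exact hc
      simpa [ZMod.intCast_zmod_eq_zero_iff_dvd] using h
    · simpa using e1
    · simpa using e2
  -- helper to destruct Rel
  have unRel : ∀ w : ℤ × ℤ, Rel (x, y) w → ∃ a b c d u : ℤ,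
      a * d - b * c = 1 ∧ (N : ℤ) ^ 2 ∣ c ∧ u * u = 1 ∧
      a * x + b * y = u * w.1 ∧ c * x + d * y = u * w.2 := by
    intro w hw
    rw [hRel] at hw
    obtain ⟨γ, hγ, u, e1, e2⟩ := hw
    refine ⟨_, _, _, _, (u : ℤ), ?_, ?_, ?_, e1, e2⟩
    · have h := γ.2; rw [Matrix.det_fin_two] at h; linarith
    · rw [Gamma0_mem] at hγ
      have h := (ZMod.intCast_zmod_eq_zero_iff_dvd _ (N ^ 2)).mp hγ
      exact_mod_cast h
    · rcases Int.units_eq_one_or u with h | h <;> simp [h]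
  -- signature of a representative related to (x,y)
  have sig : ∀ i : Fin (N + 1), Rel (x, y) (rep i) →
      ((i : ℕ) = 0 ∧ (N : ℤ) ^ 2 ∣ y) ∨
      ((i : ℕ) = 1 ∧ ¬ (N : ℤ) ∣ y) ∨
      (2 ≤ (i : ℕ) ∧ (N : ℤ) ∣ y ∧ ¬ (N : ℤ) ^ 2 ∣ y ∧
        (N : ℤ) ^ 2 ∣ (x * y - (((i : ℕ) : ℤ) - 1) * N)) := by
    intro i hi
    obtain ⟨a, b, c, d, u, hdet, hc, hu, e1, e2⟩ := unRel (rep i) hi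
    have hNdvdsq : (N : ℤ) ∣ (N : ℤ) ^ 2 := dvd_pow_self _ two_ne_zero
    rcases Nat.lt_or_ge (i : ℕ) 2 with h2 | h2
    · interval_cases h : (i : ℕ)
      · left
        refine ⟨rfl, ?_⟩
        have hri : rep i = (1, 0) := by
          rw [show i = 0 from Fin.ext (by simp [h]), hrep0]
        rw [hri] at e2
        exact (aux_dvd_iff hdet hc hu e2).mpr (dvd_zero _)
      · right; left
        refine ⟨rfl, ?_⟩
        have hri : rep i = (0, 1) := by
          rw [show i = 1 from Fin.ext (by rw [h, hone]), hrep1]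
        rw [hri] at e2
        intro hy
        have h1 := (aux_dvd_iff hdet (hNdvdsq.trans hc) hu e2).mp hy
        have := Int.le_of_dvd one_pos h1
        linarith
    · right; right
      have hri : rep i = (((i : ℕ) : ℤ) - 1, (N : ℤ)) := hrep i h2
      rw [hri] at e1 e2
      have hy : (N : ℤ) ∣ y := (aux_dvd_iff hdet (hNdvdsq.trans hc) hu e2).mpr ⟨1, by ring⟩
      have hy2 : ¬ (N : ℤ) ^ 2 ∣ y := by
        intro hy2
        have h1 := (aux_dvd_iff hdet hc hu e2).mp hy2
        have := Int.le_of_dvd hNpos h1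
        nlinarith
      exact ⟨h2, hy, hy2, aux_prod hdet hc hu e1 e2 hy⟩
  -- uniqueness
  have uniq : ∀ i j : Fin (N + 1), Rel (x, y) (rep i) → Rel (x, y) (rep j) → i = j := by
    intro i j hi hj
    have hNdvdsq : (N : ℤ) ∣ (N : ℤ) ^ 2 := dvd_pow_self _ two_ne_zero
    rcases sig i hi with ⟨h, hy⟩ | ⟨h, hy⟩ | ⟨h, hy1, hy2, hp⟩ <;>
      rcases sig j hj with ⟨h', hy'⟩ | ⟨h', hy'⟩ | ⟨h', hy1', hy2', hp'⟩
    · exact Fin.ext (by omega)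
    · exact absurd (hNdvdsq.trans hy) hy'
    · exact absurd hy hy2'
    · exact absurd (hNdvdsq.trans hy') hy
    · exact Fin.ext (by omega)
    · exact absurd hy1' hy
    · exact absurd hy' hy2
    · exact absurd hy1 hy'
    · -- both middle-type cusps
      have hd2 : (N : ℤ) ∣ (((i : ℕ) : ℤ) - ((j : ℕ) : ℤ)) := by
        have h3 : (N : ℤ) * (N : ℤ) ∣ (N : ℤ) * (((i : ℕ) : ℤ) - ((j : ℕ) : ℤ)) := by
          have hsub := dvd_sub hp' hp
          rw [sq] at hsub
          convert hsub using 1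
          exacts [rfl, by ring]
        exact (mul_dvd_mul_iff_left (by linarith : (N : ℤ) ≠ 0)).mp h3
      obtain ⟨k, hk⟩ := hd2
      have hiN : (i : ℕ) ≤ N := Nat.lt_succ_iff.mp i.isLt
      have hjN : (j : ℕ) ≤ N := Nat.lt_succ_iff.mp j.isLt
      have hiZ : ((i : ℕ) : ℤ) ≤ N := by exact_mod_cast hiN
      have hjZ : ((j : ℕ) : ℤ) ≤ N := by exact_mod_cast hjN
      have hi2 : (2 : ℤ) ≤ ((i : ℕ) : ℤ) := by exact_mod_cast h
      have hj2 : (2 : ℤ) ≤ ((j : ℕ) : ℤ) := by exact_mod_cast h'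
      have hk0 : k = 0 := by
        rcases lt_trichotomy k 0 with hlt | he | hgt
        · have hle : k ≤ -1 := by omega
          have := mul_le_mul_of_nonneg_left hle (by linarith : (0 : ℤ) ≤ (N : ℤ))
          linarith
        · exact he
        · have hge : 1 ≤ k := by omega
          have := mul_le_mul_of_nonneg_left hge (by linarith : (0 : ℤ) ≤ (N : ℤ))
          linarith
      have hij : ((i : ℕ) : ℤ) = ((j : ℕ) : ℤ) := by rw [hk0] at hk; linarith
      exact Fin.ext (by exact_mod_cast hij)
  -- existence
  by_cases hy2 : (N : ℤ) ^ 2 ∣ y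
  · obtain ⟨a, b, hab⟩ := hcop
    have h0 : Rel (x, y) (rep 0) := by
      apply mkRel a b (-y) x
      · linarith [hab]
      · exact dvd_neg.mpr hy2
      · rw [hrep0]; exact hab
      · rw [hrep0]; ring
    exact ⟨0, h0, fun j hj => uniq j 0 hj h0⟩
  by_cases hy1 : (N : ℤ) ∣ y
  · -- middle case: cusps k/N
    obtain ⟨t, ht⟩ := hy1
    have hy1' : (N : ℤ) ∣ y := ⟨t, ht⟩
    have hNx : ¬ (N : ℤ) ∣ x := by
      intro hx
      have hg : (N : ℤ) ∣ ((Int.gcd x y : ℕ) : ℤ) := Int.dvd_coe_gcd hx hy1'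
      rw [hxy] at hg
      push_cast at hg
      have := Int.le_of_dvd one_pos hg
      linarith
    have hNt : ¬ (N : ℤ) ∣ t := by
      intro hdt
      obtain ⟨s, hs⟩ := hdt
      exact hy2 ⟨s, by rw [ht, hs]; ring⟩
    set k : ℤ := (x * t) % N with hkdef
    have hk0 : 0 ≤ k := Int.emod_nonneg _ (by linarith)
    have hkN : k < N := Int.emod_lt_of_pos _ hNpos
    have hkne : k ≠ 0 := by
      intro h0
      have hdvd : (N : ℤ) ∣ x * t := Int.dvd_of_emod_eq_zero (by rw [← hkdef]; exact h0)
      rcases hNprime.dvd_mul.mp hdvd with h | h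
      exacts [hNx h, hNt h]
    -- bottom row of the matrix
    have hct : IsCoprime ((N : ℤ) * x) t := by
      have h1 : IsCoprime (N : ℤ) t := hNprime.coprime_iff_not_dvd.mpr hNt
      have h2 : IsCoprime x t := hcop.of_isCoprime_of_dvd_right ⟨N, by rw [ht]; ring⟩
      exact h1.mul_left h2
    obtain ⟨p, q, hpq⟩ := hct
    have hcd : ((N : ℤ) ^ 2 * p) * x + q * y = N := by
      rw [ht]; linear_combination (N : ℤ) * hpq
    have hcdcop : IsCoprime ((N : ℤ) ^ 2 * p) q := by
      have h1 : IsCoprime (N : ℤ) q := ⟨p * x, t, by linear_combination hpq⟩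
      have h2 : IsCoprime ((N : ℤ) * p) q := ⟨x, t, by linear_combination hpq⟩
      have h3 := h1.mul_left h2
      rwa [show (N : ℤ) * ((N : ℤ) * p) = (N : ℤ) ^ 2 * p from by ring] at h3
    obtain ⟨a0, b0, hc0⟩ := hcdcop
    -- hc0 : a0 * (N^2*p) + b0 * q = 1
    have hmod : (N : ℤ) ∣ k - (b0 * x + (-a0) * y) := by
      have h1 : (N : ℤ) ∣ x * t - k := by
        refine ⟨(x * t) / N, ?_⟩
        have := Int.mul_ediv_add_emod (x * t) (N : ℤ)
        rw [hkdef]; linarith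
      have h2 : (N : ℤ) ∣ (b0 * x + (-a0) * y) - x * t :=
        ⟨(b0 * x + (-a0) * y) * (p * x) + (-a0) * t, by
          linear_combination (-(b0 * x + (-a0) * y)) * hpq + (-(a0 * t)) * hcd
            + (t * x) * hc0⟩
      rw [show k - (b0 * x + (-a0) * y)
          = -((x * t - k) + ((b0 * x + (-a0) * y) - x * t)) from by ring]
      exact dvd_neg.mpr (dvd_add h1 h2)
    obtain ⟨s, hs⟩ := hmod
    refine ⟨⟨k.toNat + 1, by omega⟩, ?_, ?_⟩
    · have hi2 : 2 ≤ ((⟨k.toNat + 1, by omega⟩ : Fin (N + 1)) : ℕ) := by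
        show 2 ≤ k.toNat + 1; omega
      have hri := hrep _ hi2
      have hcast : (((⟨k.toNat + 1, by omega⟩ : Fin (N + 1)) : ℕ) : ℤ) - 1 = k := by
        show ((k.toNat + 1 : ℕ) : ℤ) - 1 = k
        push_cast [Int.toNat_of_nonneg hk0]; ring
      apply mkRel (b0 + s * ((N : ℤ) ^ 2 * p)) (-a0 + s * q) ((N : ℤ) ^ 2 * p) q
      · linear_combination hc0
      · exact ⟨p, by ring⟩
      · rw [hri]
        show (b0 + s * ((N : ℤ) ^ 2 * p)) * x + (-a0 + s * q) * y
            = (((⟨k.toNat + 1, by omega⟩ : Fin (N + 1)) : ℕ) : ℤ) - 1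
        rw [hcast]
        linear_combination s * hcd - hs
      · rw [hri]; exact hcd
    · intro j hj
      have hrel : Rel (x, y) (rep ⟨k.toNat + 1, by omega⟩) := by
        have hi2 : 2 ≤ ((⟨k.toNat + 1, by omega⟩ : Fin (N + 1)) : ℕ) := by
          show 2 ≤ k.toNat + 1; omega
        have hri := hrep _ hi2
        have hcast : (((⟨k.toNat + 1, by omega⟩ : Fin (N + 1)) : ℕ) : ℤ) - 1 = k := by
          show ((k.toNat + 1 : ℕ) : ℤ) - 1 = k
          push_cast [Int.toNat_of_nonneg hk0]; ring
        apply mkRel (b0 + s * ((N : ℤ) ^ 2 * p)) (-a0 + s * q) ((N : ℤ) ^ 2 * p) q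
        · linear_combination hc0
        · exact ⟨p, by ring⟩
        · rw [hri]
          show (b0 + s * ((N : ℤ) ^ 2 * p)) * x + (-a0 + s * q) * y
              = (((⟨k.toNat + 1, by omega⟩ : Fin (N + 1)) : ℕ) : ℤ) - 1
          rw [hcast]
          linear_combination s * hcd - hs
        · rw [hri]; exact hcd
      exact uniq j _ hj hrel
  · -- last case: ¬ N ∣ y, cusp 0
    have hNycop : IsCoprime ((N : ℤ) ^ 2 * x) y := by
      have h1 : IsCoprime (N : ℤ) y := hNprime.coprime_iff_not_dvd.mpr hy1
      exact (h1.pow_left).mul_left hcop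
    obtain ⟨p, q, hpq⟩ := hNycop
    have hrel : Rel (x, y) (rep 1) := by
      apply mkRel y (-x) ((N : ℤ) ^ 2 * p) q
      · linear_combination hpq
      · exact ⟨p, rfl⟩
      · rw [hrep1]; show y * x + (-x) * y = 0; ring
      · rw [hrep1]; show (N : ℤ) ^ 2 * p * x + q * y = 1; linear_combination hpq
    exact ⟨1, hrel, fun j hj => uniq j 1 hj hrel⟩
end

section
/- Let p ≥ 5 and N be distinct primes with N ≢ 1 (mod p), and let k be a field of characteristic p. Let D be the free k-module with basis {∞, [0]} ∪ {[x] : x ∈ (Z/NZ)^×}, let D^0 ⊂ D be the kernel of the k-linear map sending every basis element to 1, and set 𝔠 = Σ_{x ∈ (Z/NZ)^×} ([x] − [0]) ∈ D^0. For each prime ℓ ≠ N define a k-linear operator T_ℓ on D by T_ℓ∞ = (ℓ+1)∞, T_ℓ[0] = (ℓ+1)[0], and T_ℓ[x] = ℓ[ℓx] + [ℓ^{−1}x] for x ∈ (Z/NZ)^×; define U_N by U_N(c) = N·[0] for every basis element c ≠ ∞ and U_N(∞) = ∞ + Σ_{x ∈ (Z/NZ)^×}[x]. Then: (i) the elements ∞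 − [0] + 𝔠 and 𝔠 are k-linearly independent, satisfy T_ℓ v = (ℓ+1)v for every prime ℓ ≠ N, and satisfy U_N 𝔠 = 0 and U_N(∞ − [0] + 𝔠) = ∞ − [0] + 𝔠; (ii) conversely, every element 𝔞 ∈ D^0 with T_ℓ 𝔞 = (ℓ+1)𝔞 for every prime ℓ ≠ N lies in the k-span of {∞ − [0] + 𝔠, 𝔠}. -/
/-- Eigenspace of the cuspidal divisor group: let `p ≥ 5` and `N` be distinct primes with
`N ≢ 1 (mod p)` and `k` a field of characteristic `p`. Let `D` be the free `k`-module on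
the basis `{∞, [0]} ∪ {[x] : x ∈ (ℤ/N)ˣ}` (indexed by `Fin 2 ⊕ (ZMod N)ˣ`, with
`Sum.inl 0 = ∞` and `Sum.inl 1 = [0]`), with Hecke operators `T ℓ` (for primes `ℓ ≠ N`,
acting through the unit `u = ℓ mod N`) and `U_N` as in the paper, and
`𝔠 = ∑_x ([x] - [0])`.  Then `∞ - [0] + 𝔠` and `𝔠` are linearly independent
`T_ℓ`-eigenvectors with eigenvalue `ℓ + 1`, `U_N 𝔠 = 0`, `U_N (∞ - [0] + 𝔠) = ∞ - [0] + 𝔠`,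
and conversely every degree-zero element killed by all `T_ℓ - (ℓ+1)` lies in their span. -/
theorem cuspidal_divisor_eisenstein_eigenspace
    (p N : ℕ) (hp : p.Prime) (hp5 : 5 ≤ p) (hN : N.Prime) (hne : N ≠ p)
    (hN1 : (N : ZMod p) ≠ 1) [NeZero N]
    (k : Type*) [Field k] [CharP k p]
    (T : ℕ → (ZMod N)ˣ → ((Fin 2 ⊕ (ZMod N)ˣ) → k) → ((Fin 2 ⊕ (ZMod N)ˣ) → k))
    (hT : ∀ (ℓ : ℕ) (u : (ZMod N)ˣ) (f : (Fin 2 ⊕ (ZMod N)ˣ) → k),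
      T ℓ u f = Sum.elim (fun i => ((ℓ : k) + 1) * f (Sum.inl i))
        (fun y => (ℓ : k) * f (Sum.inr (u⁻¹ * y)) + f (Sum.inr (u * y))))
    (U : ((Fin 2 ⊕ (ZMod N)ˣ) → k) → ((Fin 2 ⊕ (ZMod N)ˣ) → k))
    (hU : ∀ f : (Fin 2 ⊕ (ZMod N)ˣ) → k,
      U f = Sum.elim
        (fun i : Fin 2 => if i = 0 then f (Sum.inl 0)
          else (N : k) * (f (Sum.inl 1) + ∑ x : (ZMod N)ˣ, f (Sum.inr x)))
        (fun _ => f (Sum.inl 0)))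
    (c : (Fin 2 ⊕ (ZMod N)ˣ) → k)
    (hc : c = ∑ x : (ZMod N)ˣ,
      (Pi.single (Sum.inr x) (1 : k) - Pi.single (Sum.inl 1) (1 : k)))
    (v : (Fin 2 ⊕ (ZMod N)ˣ) → k)
    (hv : v = Pi.single (Sum.inl 0) (1 : k) - Pi.single (Sum.inl 1) (1 : k) + c) :
    (LinearIndependent k ![v, c] ∧
      (∀ (ℓ : ℕ) (u : (ZMod N)ˣ), ℓ.Prime → ℓ ≠ N → ((u : ZMod N) = (ℓ : ZMod N)) →
        T ℓ u v = ((ℓ : k) + 1) • v ∧ T ℓ u c = ((ℓ : k) + 1) • c) ∧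
      U c = 0 ∧ U v = v) ∧
    ∀ a : (Fin 2 ⊕ (ZMod N)ˣ) → k, (∑ j, a j) = 0 →
      (∀ (ℓ : ℕ) (u : (ZMod N)ˣ), ℓ.Prime → ℓ ≠ N → ((u : ZMod N) = (ℓ : ZMod N)) →
        T ℓ u a = ((ℓ : k) + 1) • a) →
      ∃ s t : k, a = s • v + t • c := by
  haveI : Fact N.Prime := ⟨hN⟩
  haveI : Fact p.Prime := ⟨hp⟩
  have htot : ((N.totient : ℕ) : k) = (N : k) - 1 := by
    rw [Nat.totient_prime hN, Nat.cast_sub hN.one_le, Nat.cast_one]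
  have hcardk : (Fintype.card (ZMod N)ˣ : k) = (N : k) - 1 := by
    rw [ZMod.card_units_eq_totient]; exact htot
  -- values of c
  have hc0 : c (Sum.inl 0) = 0 := by
    simp [hc, Finset.sum_apply, Pi.single_apply]
  have hc1 : c (Sum.inl 1) = 1 - (N : k) := by
    simp [hc, Finset.sum_apply, Pi.single_apply]
    rw [htot]; ring
  have hcr : ∀ y : (ZMod N)ˣ, c (Sum.inr y) = 1 := by
    intro y
    simp [hc, Finset.sum_apply, Pi.single_apply]
  -- values of v
  have hv0 : v (Sum.inl 0) = 1 := by
    simp [hv, Pi.single_apply, hc0]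
  have hv1 : v (Sum.inl 1) = -(N : k) := by
    simp [hv, Pi.single_apply, hc1]
    ring
  have hvr : ∀ y : (ZMod N)ˣ, v (Sum.inr y) = 1 := by
    intro y
    simp [hv, Pi.single_apply, hcr]
  constructor
  · refine ⟨?_, ?_, ?_, ?_⟩
    · rw [linearIndependent_fin2]
      constructor
      · intro h
        have h1 : c (Sum.inr 1) = 0 := by simpa using congrFun h (Sum.inr 1)
        rw [hcr] at h1
        exact one_ne_zero h1
      · intro s h
        have h0 : s * c (Sum.inl 0) = v (Sum.inl 0) := by
          simpa using congrFun h (Sum.inl 0)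
        rw [hc0, hv0] at h0
        simp at h0
    · intro ℓ u hl hlN hu
      constructor
      · funext j
        rw [hT]
        rcases j with i | y
        · simp
        · simp only [Sum.elim_inr, Pi.smul_apply, smul_eq_mul, hvr]
          ring
      · funext j
        rw [hT]
        rcases j with i | y
        · simp
        · simp only [Sum.elim_inr, Pi.smul_apply, smul_eq_mul, hcr]
          ring
    · funext j
      rw [hU]
      rcases j with i | y
      · fin_cases i <;> simp only [Fin.zero_eta, Fin.mk_one]
        · simpa using hc0
        · simp only [Sum.elim_inl, Pi.zero_apply]
          rw [if_neg (by decide), hc1]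
          have : ∑ x : (ZMod N)ˣ, c (Sum.inr x) = (N : k) - 1 := by
            rw [Finset.sum_congr rfl fun x _ => hcr x, Finset.sum_const, Finset.card_univ,
              nsmul_eq_mul, mul_one, hcardk]
          rw [this]
          ring
      · simpa using hc0
    · funext j
      rw [hU]
      rcases j with i | y
      · fin_cases i <;> simp only [Fin.zero_eta, Fin.mk_one]
        · simp
        · simp only [Sum.elim_inl]
          rw [if_neg (by decide), hv1]
          have : ∑ x : (ZMod N)ˣ, v (Sum.inr x) = (N : k) - 1 := by
            rw [Finset.sum_congr rfl fun x _ => hvr x, Finset.sum_const, Finset.card_univ,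
              nsmul_eq_mul, mul_one, hcardk]
          rw [this]
          ring
      · simp only [Sum.elim_inr, hvr, hv0]
  -- converse
  · intro a hsum hEig
    -- Dirichlet: for each unit u mod N and unit r mod p, find a prime ℓ ≡ u (N), ≡ r (p)
    haveI : NeZero (N * p) := ⟨Nat.mul_ne_zero hN.ne_zero hp.ne_zero⟩
    have hcop : Nat.Coprime N p := (Nat.coprime_primes hN hp).mpr hne
    have key : ∀ (u : (ZMod N)ˣ) (r : ZMod p), IsUnit r →
        ∃ ℓ : ℕ, ℓ.Prime ∧ ℓ ≠ N ∧ ((ℓ : ZMod N) = (u : ZMod N)) ∧ (ℓ : ZMod p) = r := by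
      intro u r hr
      obtain ⟨r', rfl⟩ := hr
      set e := ZMod.chineseRemainder hcop with he
      set x : ZMod (N * p) := e.symm ((u : ZMod N), (r' : ZMod p)) with hx
      have hxu : IsUnit x := by
        have hpr : IsUnit ((u : ZMod N), (r' : ZMod p)) :=
          ⟨MulEquiv.prodUnits.symm (u, r'), rfl⟩
        exact hpr.map e.symm.toRingHom
      obtain ⟨ℓ, _, hl, hcast⟩ := Nat.forall_exists_prime_gt_and_eq_mod hxu 0
      have hex : e (ℓ : ZMod (N * p)) = ((ℓ : ZMod N), (ℓ : ZMod p)) := by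
        rw [map_natCast]
        exact Prod.ext (by simp) (by simp)
      rw [hcast, hx, RingEquiv.apply_symm_apply] at hex
      have h1 : (ℓ : ZMod N) = (u : ZMod N) := (Prod.mk.injEq _ _ _ _ ▸ hex).1.symm
      have h2 : (ℓ : ZMod p) = (r' : ZMod p) := (Prod.mk.injEq _ _ _ _ ▸ hex).2.symm
      refine ⟨ℓ, hl, ?_, h1, h2⟩
      rintro rfl
      rw [ZMod.natCast_self] at h1
      exact u.ne_zero h1.symm
    -- invariance of a on the units part
    have hinv : ∀ (u : (ZMod N)ˣ) (y : (ZMod N)ˣ),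
        a (Sum.inr (u⁻¹ * y)) = a (Sum.inr y) := by
      intro u y
      have h2u : IsUnit (2 : ZMod p) := by
        rw [isUnit_iff_ne_zero]
        intro h
        rw [show ((2 : ZMod p)) = ((2 : ℕ) : ZMod p) by push_cast; ring,
          ZMod.natCast_eq_zero_iff] at h
        have := Nat.le_of_dvd two_pos h
        omega
      obtain ⟨ℓ₁, hl₁, hl₁N, hu₁, hr₁⟩ := key u 1 isUnit_one
      obtain ⟨ℓ₂, hl₂, hl₂N, hu₂, hr₂⟩ := key u 2 h2u
      have c₁ : ((ℓ₁ : ℕ) : k) = 1 := by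
        have h := map_natCast (ZMod.castHom (dvd_refl p) k) ℓ₁
        rw [hr₁, map_one] at h
        exact h.symm
      have c₂ : ((ℓ₂ : ℕ) : k) = 2 := by
        have h := map_natCast (ZMod.castHom (dvd_refl p) k) ℓ₂
        rw [hr₂] at h
        rw [← h, show (2 : ZMod p) = 1 + 1 by norm_num, map_add, map_one]
        norm_num
      have E₁ := congrFun (hEig ℓ₁ u hl₁ hl₁N hu₁.symm) (Sum.inr y)
      have E₂ := congrFun (hEig ℓ₂ u hl₂ hl₂N hu₂.symm) (Sum.inr y)
      rw [hT] at E₁ E₂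
      simp only [Sum.elim_inr, Pi.smul_apply, smul_eq_mul, c₁, c₂] at E₁ E₂
      linear_combination E₂ - E₁
    have hconst : ∀ y : (ZMod N)ˣ, a (Sum.inr y) = a (Sum.inr 1) := by
      intro y
      have := hinv y⁻¹ 1
      simpa using this
    set s : k := a (Sum.inl 0) with hs
    set t' : k := a (Sum.inr 1) with ht'
    have hsum' : a (Sum.inl 1) = -s - ((N : k) - 1) * t' := by
      rw [Fintype.sum_sum_type, Fin.sum_univ_two] at hsum
      rw [Finset.sum_congr rfl fun y _ => hconst y, Finset.sum_const, Finset.card_univ,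
        nsmul_eq_mul, hcardk] at hsum
      linear_combination hsum
    refine ⟨s, t' - s, ?_⟩
    funext j
    rcases j with i | y
    · fin_cases i <;> simp only [Fin.zero_eta, Fin.mk_one]
      · simp only [Pi.add_apply, Pi.smul_apply, smul_eq_mul]
        rw [hv0, hc0]
        ring
      · simp only [Pi.add_apply, Pi.smul_apply, smul_eq_mul]
        rw [hv1, hc1, hsum']
        ring
    · simp only [Pi.add_apply, Pi.smul_apply, smul_eq_mul]
      rw [hvr, hcr, hconst y]
      ring
end

section
/- Let N and p be primes with p ≥ 5, let F = Q(N^{1/p}) with ring of integers O_F, and let ℓ be a prime with ℓ ≠ p and ℓ ≠ N. Let r be the multiplicative order of ℓ modulo p. If the image of N in (Z/ℓZ)^× is not a p-th power, then ℓ is inert in F, i.e., ℓO_F is a prime ideal. If the image of N in (Z/ℓZ)^× is a p-th power, then there are exactly (p−1)/r + 1 prime ideals of O_F lying over ℓ, exactly one of which has residue degree 1 while all the others have residue degree r. -/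
open Polynomial NumberField Ideal UniqueFactorizationMonoid



lemma pow_pow_eq_self {ℓ : ℕ} [Fact ℓ.Prime] (b : ZMod ℓ) (n : ℕ) : b ^ ℓ ^ n = b :=
  ZMod.pow_card_pow b

/-- Key polynomial lemma: any monic irreducible factor of `X^p - b^p` other than `X - b`
has degree `r = orderOf (ℓ : ZMod p)`. -/
lemma natDegree_factor_eq_orderOf (p ℓ : ℕ) (hp : p.Prime) (hl : ℓ.Prime) (hlp : ℓ ≠ p)
    (b : ZMod ℓ) (hb : b ≠ 0) (g : (ZMod ℓ)[X]) (hirr : Irreducible g) (hmon : g.Monic)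
    (hdvd : g ∣ X ^ p - C (b ^ p)) (hne : g ≠ X - C b) :
    g.natDegree = orderOf (ℓ : ZMod p) := by
  haveI : Fact ℓ.Prime := ⟨hl⟩
  haveI : Fact p.Prime := ⟨hp⟩
  haveI : Fact (Irreducible g) := ⟨hirr⟩
  set r := orderOf (ℓ : ZMod p) with hr
  have hlp0 : (ℓ : ZMod p) ≠ 0 := by
    intro h
    exact hlp ((Nat.prime_dvd_prime_iff_eq hp hl).mp
      ((ZMod.natCast_eq_zero_iff _ _).mp h)).symm
  have hrpos : 0 < r :=
    orderOf_pos_iff.mpr (isOfFinOrder_iff_pow_eq_one.mpr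
      ⟨p - 1, by have := hp.two_le; omega, ZMod.pow_card_sub_one_eq_one hlp0⟩)
  have hlr : (ℓ : ZMod p) ^ r = 1 := pow_orderOf_eq_one _
  set E := AdjoinRoot g with hE
  have hg0 : g ≠ 0 := hirr.ne_zero
  set γ : E := AdjoinRoot.root g with hγ
  set b' : E := algebraMap (ZMod ℓ) E b with hb'
  have hbinj : Function.Injective (algebraMap (ZMod ℓ) E) := (algebraMap (ZMod ℓ) E).injective
  have hb'0 : b' ≠ 0 := by
    simp only [hb', Ne, map_eq_zero_iff _ hbinj]; exact hb
  have hγp : γ ^ p = b' ^ p := by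
    have h0 : (aeval γ) (X ^ p - C (b ^ p)) = 0 := by
      obtain ⟨h, hh⟩ := hdvd
      rw [hh, _root_.map_mul]
      have : (aeval γ) g = 0 := by
        rw [hγ, AdjoinRoot.aeval_eq, AdjoinRoot.mk_self]
      rw [this, zero_mul]
    simpa [sub_eq_zero, map_pow] using h0
  have hγne : γ ≠ b' := by
    intro h
    apply hne
    have h1 : minpoly (ZMod ℓ) γ = g := by
      rw [AdjoinRoot.minpoly_root hg0, hmon.leadingCoeff, inv_one, map_one, mul_one]
    rw [← h1, h, hb', minpoly.eq_X_sub_C]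
  set ζ : E := γ * b'⁻¹ with hζ
  have hζp : ζ ^ p = 1 := by
    rw [hζ, mul_pow, hγp, inv_pow, mul_inv_cancel₀ (pow_ne_zero _ hb'0)]
  have hζ1 : ζ ≠ 1 := by
    intro h
    apply hγne
    rw [hζ, mul_inv_eq_one₀ hb'0] at h
    exact h
  have hζord : orderOf ζ = p := orderOf_eq_prime hζp hζ1
  have hζ0 : ζ ≠ 0 := by
    intro h; rw [h] at hζp; simpa [zero_pow hp.ne_zero] using hζp.symm
  -- E is a finite field of cardinality ℓ ^ d
  set d := g.natDegree with hd
  have hdpos : 0 < d := hirr.natDegree_pos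
  haveI : Module.Finite (ZMod ℓ) E := PowerBasis.finite (AdjoinRoot.powerBasis hg0)
  haveI : Finite E := Module.finite_of_finite (ZMod ℓ)
  haveI : Fintype E := Fintype.ofFinite E
  have hcard : Fintype.card E = ℓ ^ d := by
    rw [Module.card_eq_pow_finrank (K := ZMod ℓ) (V := E), ZMod.card,
      (AdjoinRoot.powerBasis hg0).finrank, AdjoinRoot.powerBasis_dim]
  -- r ∣ d
  have hrd : r ∣ d := by
    classical
    have hu : orderOf (Units.mk0 ζ hζ0) = p := by
      rw [← orderOf_units]; exact hζord
    have : p ∣ Fintype.card Eˣ := hu ▸ orderOf_dvd_card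
    rw [Fintype.card_units, hcard] at this
    have h1 : 1 ≤ ℓ ^ d := Nat.one_le_pow _ _ hl.pos
    have : ((ℓ : ZMod p)) ^ d = 1 := by
      have : ((ℓ ^ d : ℕ) : ZMod p) = 1 := by
        have h2 : ℓ ^ d = (ℓ ^ d - 1) + 1 := by omega
        rw [h2, Nat.cast_add, Nat.cast_one, (ZMod.natCast_eq_zero_iff _ _).mpr this,
          zero_add]
      simpa using this
    exact orderOf_dvd_of_pow_eq_one this
  -- d ≤ r
  haveI : CharP E ℓ := charP_of_injective_algebraMap hbinj ℓ
  have hdr : d ≤ r := by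
    have hζr : ζ ^ ℓ ^ r = ζ := by
      have : p ∣ ℓ ^ r - 1 := by
        have : ((ℓ ^ r - 1 : ℕ) : ZMod p) = 0 := by
          have h1 : 1 ≤ ℓ ^ r := Nat.one_le_pow _ _ hl.pos
          rw [Nat.cast_sub h1, Nat.cast_pow, Nat.cast_one, hlr, sub_self]
        exact (ZMod.natCast_eq_zero_iff _ _).mp this
      obtain ⟨k, hk⟩ := this
      have h1 : 1 ≤ ℓ ^ r := Nat.one_le_pow _ _ hl.pos
      have : ℓ ^ r = p * k + 1 := by omega
      rw [this, pow_add, pow_mul, hζp, one_pow, pow_one, one_mul]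
    -- the subalgebra of elements fixed by x ↦ x ^ ℓ ^ r
    set S : Subalgebra (ZMod ℓ) E :=
      { carrier := {x | x ^ ℓ ^ r = x}
        mul_mem' := fun {x y} hx hy => by
          simp only [Set.mem_setOf_eq] at *
          rw [mul_pow, hx, hy]
        one_mem' := one_pow _
        add_mem' := fun {x y} hx hy => by
          simp only [Set.mem_setOf_eq] at *
          rw [add_pow_char_pow, hx, hy]
        zero_mem' := by simp [zero_pow (pow_ne_zero _ hl.ne_zero)]
        algebraMap_mem' := fun c => by
          simp only [Set.mem_setOf_eq, ← map_pow, pow_pow_eq_self] } with hS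
    have hγS : γ ∈ S := by
      have hγζ : γ = ζ * b' := by rw [hζ, inv_mul_cancel_right₀ hb'0]
      show γ ^ ℓ ^ r = γ
      have hb'r : b' ^ ℓ ^ r = b' := by rw [hb', ← map_pow, pow_pow_eq_self]
      rw [hγζ, mul_pow, hζr, hb'r]
    have hall : ∀ x : E, x ^ ℓ ^ r = x := by
      intro x
      have : (⊤ : Subalgebra (ZMod ℓ) E) ≤ S := by
        rw [← AdjoinRoot.adjoinRoot_eq_top (f := g)]
        exact Algebra.adjoin_le (by simpa using hγS)
      exact this (by trivial) -- x ∈ ⊤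
    -- every element of E is a root of X ^ ℓ ^ r - X
    set P : E[X] := X ^ ℓ ^ r - X with hP
    have h1r : 1 < ℓ ^ r := by
      calc 1 < ℓ := hl.one_lt
      _ = ℓ ^ 1 := (pow_one _).symm
      _ ≤ ℓ ^ r := Nat.pow_le_pow_right hl.pos hrpos
    have hPdeg : P.natDegree = ℓ ^ r := by
      rw [hP, natDegree_sub_eq_left_of_natDegree_lt] <;> simp [h1r]
    have hP0 : P ≠ 0 := by
      intro h; rw [h] at hPdeg; simp at hPdeg; omega
    have hsub : (Finset.univ : Finset E) ⊆ P.roots.toFinset := by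
      intro x _
      rw [Multiset.mem_toFinset, mem_roots hP0]
      simp [hP, IsRoot, hall x]
    have := Finset.card_le_card hsub
    rw [Finset.card_univ, hcard] at this
    have h2 : P.roots.toFinset.card ≤ ℓ ^ r := by
      calc P.roots.toFinset.card ≤ Multiset.card P.roots := Multiset.toFinset_card_le _
      _ ≤ P.natDegree := P.card_roots'
      _ = ℓ ^ r := hPdeg
    have h3 : ℓ ^ d ≤ ℓ ^ r := le_trans this h2
    exact (Nat.pow_le_pow_iff_right hl.one_lt).mp h3
  exact le_antisymm hdr (Nat.le_of_dvd hdpos hrd)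

open Polynomial NumberField Ideal UniqueFactorizationMonoid

section Plumbing
variable {R S : Type*} [CommRing R] [CommRing S]

noncomputable def primesComapEquiv (ρ : R →+* S) (hρ : Function.Surjective ρ) :
    {Q : Ideal S // Q.IsPrime} ≃ {P : Ideal R // P.IsPrime ∧ RingHom.ker ρ ≤ P} where
  toFun Q := ⟨Q.1.comap ρ, ⟨Q.2.comap ρ, fun x hx => by
    simp only [Ideal.mem_comap]
    rw [RingHom.mem_ker] at hx
    rw [hx]
    exact Q.1.zero_mem⟩⟩
  invFun P := ⟨P.1.map ρ, by
    haveI := P.2.1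
    exact Ideal.map_isPrime_of_surjective hρ P.2.2⟩
  left_inv Q := Subtype.ext (Ideal.map_comap_of_surjective ρ hρ Q.1)
  right_inv P := Subtype.ext (by
    show (Ideal.map ρ P.1).comap ρ = P.1
    rw [Ideal.comap_map_of_surjective ρ hρ]
    exact sup_eq_left.mpr (le_trans (by rw [← RingHom.ker_eq_comap_bot]) P.2.2))

noncomputable def quotComapEquiv (ρ : R →+* S) (hρ : Function.Surjective ρ) (Q : Ideal S) :
    R ⧸ Q.comap ρ ≃+* S ⧸ Q :=
  RingEquiv.ofBijective (Ideal.quotientMap Q ρ le_rfl)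
    ⟨Ideal.quotientMap_injective, Ideal.quotientMap_surjective hρ⟩

end Plumbing

/-- Membership of a monic irreducible divisor in the normalized factors. -/
lemma mem_normalizedFactors_of_monic_irreducible_dvd {A : Type*} [Field A] [DecidableEq A]
    {f g : A[X]} (hf : f ≠ 0) (hirr : Irreducible g) (hmon : g.Monic) (hdvd : g ∣ f) :
    g ∈ normalizedFactors f := by
  obtain ⟨q, hq, hassoc⟩ := exists_mem_normalizedFactors_of_dvd hf hirr hdvd
  have : g = q := by
    have h1 : normalize g = normalize q := normalize_eq_normalize hassoc.dvd hassoc.symm.dvd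
    rwa [hmon.normalize_eq_self, normalize_normalized_factor q hq] at h1
  rwa [this]

lemma card_quot_span_poly (ℓ : ℕ) [Fact ℓ.Prime] (g : (ZMod ℓ)[X]) (hg0 : g ≠ 0) :
    Nat.card ((ZMod ℓ)[X] ⧸ Ideal.span {g}) = ℓ ^ g.natDegree := by
  show Nat.card (AdjoinRoot g) = ℓ ^ g.natDegree
  haveI : Module.Finite (ZMod ℓ) (AdjoinRoot g) := PowerBasis.finite (AdjoinRoot.powerBasis hg0)
  haveI : Finite (AdjoinRoot g) := Module.finite_of_finite (ZMod ℓ)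
  haveI : Fintype (AdjoinRoot g) := Fintype.ofFinite _
  rw [Nat.card_eq_fintype_card, Module.card_eq_pow_finrank (K := ZMod ℓ), ZMod.card,
    (AdjoinRoot.powerBasis hg0).finrank, AdjoinRoot.powerBasis_dim]

set_option maxHeartbeats 2000000 in
set_option synthInstance.maxHeartbeats 1000000 in
theorem conclusion_part2 (N p ℓ : ℕ) (hN : N.Prime) (hp : p.Prime) (hl : ℓ.Prime)
    (hp5 : 5 ≤ p) (hNp : N ≠ p) (hlp : ℓ ≠ p) (hlN : ℓ ≠ N)
    (K : Type*) [Field K] [NumberField K]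
    (r : ℕ) (hr : r = orderOf (ℓ : ZMod p))
    (e : (𝓞 K ⧸ Ideal.span {(ℓ : 𝓞 K)}) ≃+*
      ((ZMod ℓ)[X] ⧸ Ideal.span {(X ^ p - C (N : ZMod ℓ) : (ZMod ℓ)[X])}))
    (b : ZMod ℓ) (hb : b ^ p = (N : ZMod ℓ)) :
    Nat.card {P : Ideal (𝓞 K) // P.IsPrime ∧ (ℓ : 𝓞 K) ∈ P} = (p - 1) / r + 1 ∧
    ∃ P₀ : Ideal (𝓞 K), P₀.IsPrime ∧ (ℓ : 𝓞 K) ∈ P₀ ∧ Ideal.absNorm P₀ = ℓ ∧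
      ∀ P : Ideal (𝓞 K), P.IsPrime → (ℓ : 𝓞 K) ∈ P → P ≠ P₀ →
        Ideal.absNorm P = ℓ ^ r := by
  haveI : Fact ℓ.Prime := ⟨hl⟩
  haveI : Fact p.Prime := ⟨hp⟩
  have hp0 : p ≠ 0 := hp.ne_zero
  set fbar : (ZMod ℓ)[X] := X ^ p - C (N : ZMod ℓ) with hfbar
  have hN0 : (N : ZMod ℓ) ≠ 0 := by
    intro h
    exact hlN ((Nat.prime_dvd_prime_iff_eq hl hN).mp ((ZMod.natCast_eq_zero_iff _ _).mp h))
  have hb0 : b ≠ 0 := by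
    intro h; rw [h, zero_pow hp0] at hb; exact hN0 hb.symm
  have hfmon : fbar.Monic := monic_X_pow_sub_C _ hp0
  have hf0 : fbar ≠ 0 := hfmon.ne_zero
  have hfdeg : fbar.natDegree = p := natDegree_X_pow_sub_C
  have hpl0 : ((p : ℕ) : ZMod ℓ) ≠ 0 := by
    intro h
    exact hlp ((Nat.prime_dvd_prime_iff_eq hl hp).mp ((ZMod.natCast_eq_zero_iff _ _).mp h))
  have hsq : Squarefree fbar := (separable_X_pow_sub_C _ hpl0 hN0).squarefree
  have hrpos : 0 < r := by
    rw [hr]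
    have hlpz : (ℓ : ZMod p) ≠ 0 := by
      intro h
      exact hlp ((Nat.prime_dvd_prime_iff_eq hp hl).mp
        ((ZMod.natCast_eq_zero_iff _ _).mp h)).symm
    exact orderOf_pos_iff.mpr (isOfFinOrder_iff_pow_eq_one.mpr
      ⟨p - 1, by have := hp.two_le; omega, ZMod.pow_card_sub_one_eq_one hlpz⟩)
  -- the quotient ring B and the surjections
  set B := (ZMod ℓ)[X] ⧸ Ideal.span {fbar} with hB
  set ρ : 𝓞 K →+* B := (e : (𝓞 K ⧸ Ideal.span {(ℓ : 𝓞 K)}) →+* B).comp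
    (Ideal.Quotient.mk (Ideal.span {(ℓ : 𝓞 K)})) with hρdef
  have hρ : Function.Surjective ρ := e.surjective.comp Ideal.Quotient.mk_surjective
  have hkerρ : RingHom.ker ρ = Ideal.span {(ℓ : 𝓞 K)} := by
    ext x
    simp only [hρdef, RingHom.mem_ker, RingHom.comp_apply]
    rw [show ∀ y, (e : (𝓞 K ⧸ Ideal.span {(ℓ : 𝓞 K)}) →+* B) y = e y from fun _ => rfl,
      EmbeddingLike.map_eq_zero_iff, Ideal.Quotient.eq_zero_iff_mem]
  set π : (ZMod ℓ)[X] →+* B := Ideal.Quotient.mk (Ideal.span {fbar}) with hπdef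
  have hπ : Function.Surjective π := Ideal.Quotient.mk_surjective
  have hkerπ : RingHom.ker π = Ideal.span {fbar} := Ideal.mk_ker
  -- the finset of monic irreducible factors
  classical
  set M := normalizedFactors fbar with hM
  set t := M.toFinset with ht
  -- the bijection E3 between factors and primes of (ZMod ℓ)[X] over fbar
  have hprime_span : ∀ g ∈ t, (Ideal.span {g}).IsPrime ∧ RingHom.ker π ≤ Ideal.span {g} := by
    intro g hg
    rw [Multiset.mem_toFinset] at hg
    have hgp : Prime g := prime_of_normalized_factor g hg
    refine ⟨(Ideal.span_singleton_prime hgp.ne_zero).mpr hgp, ?_⟩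
    rw [hkerπ]
    exact Ideal.span_singleton_le_span_singleton.mpr (dvd_of_mem_normalizedFactors hg)
  have E3bij : Function.Bijective (fun g : {g // g ∈ t} =>
      (⟨Ideal.span {g.1}, hprime_span g.1 g.2⟩ :
        {P' : Ideal (ZMod ℓ)[X] // P'.IsPrime ∧ RingHom.ker π ≤ P'})) := by
    constructor
    · rintro ⟨g₁, hg₁⟩ ⟨g₂, hg₂⟩ h
      have h' : Ideal.span {g₁} = Ideal.span {g₂} := congrArg Subtype.val h
      have hassoc : Associated g₁ g₂ := Ideal.span_singleton_eq_span_singleton.mp h'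
      rw [Multiset.mem_toFinset] at hg₁ hg₂
      refine Subtype.ext ?_
      have h1 : normalize g₁ = normalize g₂ :=
        normalize_eq_normalize hassoc.dvd hassoc.symm.dvd
      rwa [normalize_normalized_factor g₁ hg₁, normalize_normalized_factor g₂ hg₂] at h1
    · rintro ⟨P', hP', hker⟩
      haveI := hP'
      have hfP : fbar ∈ P' := by
        rw [hkerπ] at hker
        exact hker (Ideal.subset_span rfl)
      have hPbot : P' ≠ ⊥ := by
        intro h
        rw [h] at hfP
        exact hf0 (Ideal.mem_bot.mp hfP)
      have hgenprime : Prime (Submodule.IsPrincipal.generator P') :=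
        Submodule.IsPrincipal.prime_generator_of_isPrime P' hPbot
      have hgendvd : Submodule.IsPrincipal.generator P' ∣ fbar := by
        rw [← Ideal.mem_span_singleton, Ideal.span_singleton_generator]
        exact hfP
      obtain ⟨q, hq, hassoc⟩ :=
        exists_mem_normalizedFactors_of_dvd hf0 hgenprime.irreducible hgendvd
      refine ⟨⟨q, Multiset.mem_toFinset.mpr hq⟩, Subtype.ext ?_⟩
      show Ideal.span {q} = P'
      rw [← Ideal.span_singleton_generator P']
      exact Ideal.span_singleton_eq_span_singleton.mpr hassoc.symm
  -- the full bijection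
  set E : {g // g ∈ t} ≃ {P : Ideal (𝓞 K) // P.IsPrime ∧ (ℓ : 𝓞 K) ∈ P} :=
    ((Equiv.ofBijective _ E3bij).trans ((primesComapEquiv π hπ).symm.trans
      (primesComapEquiv ρ hρ))).trans
      (Equiv.subtypeEquivRight (fun P => by
        rw [hkerρ, Ideal.span_singleton_le_iff_mem])) with hE
  -- value of E
  have hEval : ∀ (g : {g // g ∈ t}),
      (E g : Ideal (𝓞 K)) = Ideal.comap ρ (Ideal.map π (Ideal.span {g.1})) := fun g => rfl
  -- norm computation
  have hnorm : ∀ (g : {g // g ∈ t}),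
      Ideal.absNorm (E g : Ideal (𝓞 K)) = ℓ ^ (g.1).natDegree := by
    intro g
    have hgM : g.1 ∈ M := Multiset.mem_toFinset.mp g.2
    have hg0 : g.1 ≠ 0 := (prime_of_normalized_factor _ hgM).ne_zero
    set Q : Ideal B := Ideal.map π (Ideal.span {g.1}) with hQ
    have hcq : Ideal.comap π Q = Ideal.span {g.1} := by
      rw [hQ, Ideal.comap_map_of_surjective π hπ]
      have h1 : Ideal.comap π ⊥ = Ideal.span {fbar} := by
        rw [← RingHom.ker_eq_comap_bot, hkerπ]
      rw [h1]
      exact sup_eq_left.mpr (Ideal.span_singleton_le_span_singleton.mpr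
        (dvd_of_mem_normalizedFactors hgM))
    have hquot : Nonempty ((𝓞 K ⧸ (E g : Ideal (𝓞 K))) ≃+*
        ((ZMod ℓ)[X] ⧸ Ideal.span {g.1})) := by
      rw [hEval]
      exact ⟨(quotComapEquiv ρ hρ Q).trans
        ((quotComapEquiv π hπ Q).symm.trans (Ideal.quotEquivOfEq hcq))⟩
    obtain ⟨ε⟩ := hquot
    rw [Ideal.absNorm_apply, Submodule.cardQuot_apply, Nat.card_congr ε.toEquiv,
      card_quot_span_poly ℓ g.1 hg0]
  -- counting the factors
  have hbp : fbar = X ^ p - C (b ^ p) := by rw [hfbar, hb]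
  have hXb : (X - C b) ∈ M := by
    refine mem_normalizedFactors_of_monic_irreducible_dvd hf0 (irreducible_X_sub_C b)
      (monic_X_sub_C b) ?_
    rw [hbp, dvd_iff_isRoot]
    simp [IsRoot, hp0]
  have hdegs : ∀ g ∈ M, g ≠ X - C b → g.natDegree = r := by
    intro g hgM hne
    rw [hr]
    have hgp := prime_of_normalized_factor g hgM
    have hgmon : g.Monic := by
      have := monic_normalize (p := g) hgp.ne_zero
      rwa [normalize_normalized_factor g hgM] at this
    exact natDegree_factor_eq_orderOf p ℓ hp hl hlp b hb0 g hgp.irreducible hgmon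
      (hbp ▸ dvd_of_mem_normalizedFactors hgM) hne
  have hnodup : M.Nodup := (squarefree_iff_nodup_normalizedFactors hf0).mp hsq
  have hMprod : M.prod = fbar := by
    have hmonpr : M.prod.Monic := by
      refine monic_multiset_prod_of_monic _ _ (fun g hgM' => ?_)
      exact monic_normalize (prime_of_factor g hgM').ne_zero
    exact eq_of_monic_of_associated hmonpr hfmon (prod_normalizedFactors hf0)
  have h0M : (0 : (ZMod ℓ)[X]) ∉ M := fun h => (prime_of_normalized_factor 0 h).ne_zero rfl
  have hsum : (M.map natDegree).sum = p := by
    rw [← natDegree_multiset_prod M h0M, hMprod, hfdeg]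
  have hcons : M = (X - C b) ::ₘ M.erase (X - C b) := (Multiset.cons_erase hXb).symm
  have herase_deg : ((M.erase (X - C b)).map natDegree).sum =
      (M.erase (X - C b)).card * r := by
    have : (M.erase (X - C b)).map natDegree = (M.erase (X - C b)).map (fun _ => r) := by
      refine Multiset.map_congr rfl (fun g hg => ?_)
      have hgM : g ∈ M := Multiset.mem_of_mem_erase hg
      have hgne : g ≠ X - C b := (hnodup.mem_erase_iff.mp hg).1
      exact hdegs g hgM hgne
    rw [this, Multiset.map_const', Multiset.sum_replicate, smul_eq_mul]
  have hpsum : p = 1 + (M.erase (X - C b)).card * r := by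
    have h2 : natDegree (X - C b) + ((M.erase (X - C b)).map natDegree).sum = p := by
      rw [← Multiset.sum_cons, ← Multiset.map_cons, ← hcons, hsum]
    rw [natDegree_X_sub_C, herase_deg] at h2
    omega
  have hMpos : 0 < Multiset.card M := Multiset.card_pos.mpr (fun h => by
    rw [h] at hXb; simp at hXb)
  have hcardM : Multiset.card M = (M.erase (X - C b)).card + 1 := by
    rw [Multiset.card_erase_of_mem hXb]
    exact (Nat.succ_pred_eq_of_pos hMpos).symm
  have hdiv : (p - 1) / r = (M.erase (X - C b)).card := by
    have h1 : p - 1 = (M.erase (X - C b)).card * r := by omega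
    rw [h1, Nat.mul_div_cancel _ hrpos]
  have htcard : t.card = (p - 1) / r + 1 := by
    rw [ht, Multiset.toFinset_card_of_nodup hnodup, hcardM, hdiv]
  constructor
  · rw [Nat.card_congr E.symm, Nat.card_eq_finsetCard, htcard]
  · -- the distinguished prime P₀ over ℓ of degree 1
    have hXbt : (X - C b) ∈ t := Multiset.mem_toFinset.mpr hXb
    refine ⟨(E ⟨X - C b, hXbt⟩ : Ideal (𝓞 K)), (E ⟨X - C b, hXbt⟩).2.1,
      (E ⟨X - C b, hXbt⟩).2.2, ?_, ?_⟩
    · rw [hnorm ⟨X - C b, hXbt⟩, natDegree_X_sub_C, pow_one]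
    · intro P hP hmem hne
      set x : {P : Ideal (𝓞 K) // P.IsPrime ∧ (ℓ : 𝓞 K) ∈ P} := ⟨P, hP, hmem⟩ with hx
      set g := E.symm x with hgdef
      have hEg : E g = x := E.apply_symm_apply x
      have hgne : g.1 ≠ X - C b := by
        intro h
        have : g = ⟨X - C b, hXbt⟩ := Subtype.ext h
        rw [this] at hEg
        exact hne (congrArg Subtype.val hEg).symm
      have hPnorm : Ideal.absNorm P = ℓ ^ (g.1).natDegree := by
        have := hnorm g
        rw [hEg] at this
        exact this
      have hgM' : g.1 ∈ M := Multiset.mem_toFinset.mp g.2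
      rw [hPnorm, hdegs g.1 hgM' hgne]


set_option synthInstance.maxHeartbeats 1000000 in
set_option maxHeartbeats 2000000 in

theorem setup_equiv (N p ℓ : ℕ) (hN : N.Prime) (hp : p.Prime) (hl : ℓ.Prime) (hp5 : 5 ≤ p)
    (hNp : N ≠ p) (hlp : ℓ ≠ p) (hlN : ℓ ≠ N)
    (K : Type*) [Field K] [NumberField K] (α : K)
    (hroot : α ^ p = (N : K)) (hgen : Algebra.adjoin ℚ {α} = ⊤) :
    Nonempty ((𝓞 K ⧸ Ideal.span {(ℓ : 𝓞 K)}) ≃+*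
      ((ZMod ℓ)[X] ⧸ Ideal.span {(X ^ p - C (N : ZMod ℓ) : (ZMod ℓ)[X])})) := by
  have hp0 : p ≠ 0 := hp.ne_zero
  set fZ : ℤ[X] := X ^ p - C (N : ℤ) with hfZ
  have hfZm : fZ.Monic := monic_X_pow_sub_C _ hp0
  have hint : IsIntegral ℤ α := by
    refine ⟨fZ, hfZm, ?_⟩
    have : (aeval α) fZ = 0 := by simp [hfZ, hroot]
    simpa [aeval_def] using this
  -- minpoly over ℚ
  have hQnp : ∀ b : ℚ, b ^ p ≠ (N : ℚ) := by
    intro b hb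
    have hbint : IsIntegral ℤ b := by
      refine ⟨fZ, hfZm, ?_⟩
      have : (aeval b) fZ = 0 := by simp [hfZ, hb]
      simpa [aeval_def] using this
    obtain ⟨m, hm⟩ := IsIntegrallyClosed.isIntegral_iff.mp hbint
    have hmp : m ^ p = (N : ℤ) := by
      have hm' : (m : ℚ) = b := hm
      have : (m : ℚ) ^ p = (N : ℚ) := by rw [hm', hb]
      exact_mod_cast this
    have : m.natAbs ^ p = N := by
      have := congrArg Int.natAbs hmp
      simpa [Int.natAbs_pow] using this
    obtain ⟨-, hp1⟩ := (Nat.Prime.pow_eq_iff hN).mp this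
    omega
  have hQirr : Irreducible (X ^ p - C ((N : ℚ))) := X_pow_sub_C_irreducible_of_prime hp hQnp
  have hmin : minpoly ℚ α = X ^ p - C ((N : ℚ)) := by
    refine (minpoly.eq_of_irreducible_of_monic hQirr ?_ (monic_X_pow_sub_C _ hp0)).symm
    simp [hroot]
  set β : 𝓞 K := ⟨α, hint⟩ with hβdef
  have hβ : algebraMap (𝓞 K) K β = α := rfl
  have hβint : IsIntegral ℤ β := IsIntegralClosure.isIntegral ℤ K β
  have hminZ : minpoly ℤ β = fZ := by
    have h1 := minpoly.isIntegrallyClosed_eq_field_fractions ℚ K hβint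
    rw [hβ, hmin] at h1
    have h2 : map (algebraMap ℤ ℚ) fZ = X ^ p - C ((N : ℚ)) := by
      simp [hfZ, Polynomial.map_sub, Polynomial.map_pow]
    apply Polynomial.map_injective (algebraMap ℤ ℚ) (fun a b h => by exact_mod_cast h)
    rw [← h1, h2]
  -- power basis of K over ℚ with generator α
  have hαQ : IsIntegral ℚ α := IsIntegral.of_finite ℚ α
  set pb : PowerBasis ℚ K := (Algebra.adjoin.powerBasis hαQ).map
    ((Subalgebra.equivOfEq _ _ hgen).trans Subalgebra.topEquiv) with hpb
  have hpbgen : pb.gen = α := by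
    simp [hpb, PowerBasis.map_gen, Algebra.adjoin.powerBasis_gen]
  have hdim : pb.dim = p := by
    rw [← PowerBasis.natDegree_minpoly pb, hpbgen, hmin, natDegree_X_pow_sub_C]
  have hfin : Module.finrank ℚ K = p := by rw [pb.finrank, hdim]
  -- the discriminant
  have hodd : Odd p := hp.odd_of_ne_two (by omega)
  have hnormα : Algebra.norm ℚ α = (N : ℚ) := by
    have h := Algebra.PowerBasis.norm_gen_eq_coeff_zero_minpoly pb
    rw [hpbgen, hmin, hdim] at h
    rw [h]
    simp [coeff_X_pow, Ne.symm hp0, hodd.neg_one_pow]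
  have hder : derivative (X ^ p - C ((N : ℚ))) = C ((p : ℚ)) * X ^ (p - 1) := by
    simp [derivative_X_pow]
  have hdisc : Algebra.discr ℚ pb.basis =
      (-1) ^ (p * (p - 1) / 2) * ((p : ℚ) ^ p * (N : ℚ) ^ (p - 1)) := by
    have h := Algebra.discr_powerBasis_eq_norm ℚ pb
    rw [hpbgen, hmin, hfin, hder] at h
    rw [h]
    congr 1
    have haev : (aeval α) (C ((p : ℚ)) * X ^ (p - 1)) =
        algebraMap ℚ K ((p : ℚ)) * α ^ (p - 1) := by
      simp [Algebra.smul_def]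
    rw [haev, _root_.map_mul, map_pow, hnormα, Algebra.norm_algebraMap, hfin]
  -- the conductor is coprime to ℓ
  set D₀ : ℤ := (-1) ^ (p * (p - 1) / 2) * ((p : ℤ) ^ p * (N : ℤ) ^ (p - 1)) with hD₀
  have hD₀cast : ((D₀ : ℤ) : ℚ) = Algebra.discr ℚ pb.basis := by
    rw [hdisc, hD₀]; push_cast; ring
  have hcond : D₀ ∈ Ideal.comap (algebraMap ℤ (𝓞 K)) (conductor ℤ β) := by
    rw [Ideal.mem_comap, mem_conductor_iff]
    intro w
    have hw : IsIntegral ℤ (algebraMap (𝓞 K) K w) :=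
      (IsIntegralClosure.isIntegral ℤ K w).algebraMap
    have h := Algebra.discr_mul_isIntegral_mem_adjoin (R := ℤ) ℚ
      (B := pb) (hpbgen ▸ hint) hw
    rw [hpbgen, ← hD₀cast] at h
    have hφ : Function.Injective (IsScalarTower.toAlgHom ℤ (𝓞 K) K) :=
      NumberField.RingOfIntegers.coe_injective
    have hadj : Algebra.adjoin ℤ ({α} : Set K) =
        (Algebra.adjoin ℤ ({β} : Set (𝓞 K))).map (IsScalarTower.toAlgHom ℤ (𝓞 K) K) := by
      rw [AlgHom.map_adjoin, Set.image_singleton]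
      rfl
    rw [hadj] at h
    obtain ⟨y, hy, hyeq⟩ := h
    have hcast : (IsScalarTower.toAlgHom ℤ (𝓞 K) K) (algebraMap ℤ (𝓞 K) D₀ * w) =
        ((D₀ : ℤ) : ℚ) • algebraMap (𝓞 K) K w := by
      show algebraMap (𝓞 K) K (algebraMap ℤ (𝓞 K) D₀ * w) = _
      rw [_root_.map_mul, Algebra.smul_def, ← IsScalarTower.algebraMap_apply ℤ (𝓞 K) K,
        IsScalarTower.algebraMap_apply ℤ ℚ K]
      simp
    have : algebraMap ℤ (𝓞 K) D₀ * w = y := hφ (hcast.trans hyeq.symm)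
    rw [this]
    exact hy
  have hcop : Ideal.comap (algebraMap ℤ (𝓞 K)) (conductor ℤ β) ⊔
      Ideal.span {(ℓ : ℤ)} = ⊤ := by
    have hcpr : IsCoprime (D₀ : ℤ) ((ℓ : ℕ) : ℤ) := by
      rw [Int.isCoprime_iff_gcd_eq_one]
      have : D₀.natAbs = p ^ p * N ^ (p - 1) := by
        simp [hD₀, Int.natAbs_mul, Int.natAbs_pow]
      unfold Int.gcd
      rw [this]
      simp only [Int.natAbs_natCast]
      have h1 : Nat.Coprime p ℓ := (Nat.coprime_primes hp hl).mpr (fun h => hlp h.symm)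
      have h2 : Nat.Coprime N ℓ := (Nat.coprime_primes hN hl).mpr (fun h => hlN h.symm)
      exact Nat.Coprime.mul ((h1.pow_left _)) (h2.pow_left _)
    obtain ⟨u, v, huv⟩ := hcpr
    rw [Ideal.eq_top_iff_one, ← huv]
    exact Submodule.add_mem_sup (Ideal.mul_mem_left _ u hcond)
      (Ideal.mul_mem_left _ v (Ideal.subset_span rfl))
  -- assemble the ring equivalences
  set I : Ideal ℤ := Ideal.span {(ℓ : ℤ)} with hI
  have hval : Function.Injective (algebraMap (Algebra.adjoin ℤ ({β} : Set (𝓞 K))) (𝓞 K)) :=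
    Subtype.val_injective
  have hIℓmap : I.map (algebraMap ℤ (𝓞 K)) = Ideal.span {(ℓ : 𝓞 K)} := by
    rw [hI, Ideal.map_span, Set.image_singleton, map_natCast]
  have e1 : (Algebra.adjoin ℤ ({β} : Set (𝓞 K))) ⧸
      I.map (algebraMap ℤ (Algebra.adjoin ℤ ({β} : Set (𝓞 K)))) ≃+*
      𝓞 K ⧸ Ideal.span {(ℓ : 𝓞 K)} :=
    (quotAdjoinEquivQuotMap hcop hval).trans (Ideal.quotEquivOfEq hIℓmap)
  have ε : AdjoinRoot fZ ≃ₐ[ℤ] Algebra.adjoin ℤ ({β} : Set (𝓞 K)) :=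
    hminZ ▸ minpoly.equivAdjoin hβint
  have hmapeq : I.map (algebraMap ℤ (Algebra.adjoin ℤ ({β} : Set (𝓞 K)))) =
      (I.map (AdjoinRoot.of fZ)).map (ε : AdjoinRoot fZ →+* _) := by
    rw [Ideal.map_map]
    congr 1
    exact Subsingleton.elim _ _
  have e2 : (AdjoinRoot fZ ⧸ I.map (AdjoinRoot.of fZ)) ≃+*
      (Algebra.adjoin ℤ ({β} : Set (𝓞 K))) ⧸
        I.map (algebraMap ℤ (Algebra.adjoin ℤ ({β} : Set (𝓞 K)))) :=
    Ideal.quotientEquiv _ _ ε.toRingEquiv hmapeq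
  have e3 := AdjoinRoot.quotAdjoinRootEquivQuotPolynomialQuot I fZ
  have hψf : ∀ q : (ℤ ⧸ I)[X],
      ((Polynomial.mapEquiv (Int.quotientSpanNatEquivZMod ℓ)) : (ℤ ⧸ I)[X] →+* (ZMod ℓ)[X]) q
        = q.map (Int.quotientSpanNatEquivZMod ℓ : (ℤ ⧸ I) →+* ZMod ℓ) := fun q => by
    simp [Polynomial.mapEquiv_apply]
  have hψeq : Ideal.span {(X ^ p - C (N : ZMod ℓ) : (ZMod ℓ)[X])} =
      (Ideal.span {fZ.map (Ideal.Quotient.mk I)}).map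
        (Polynomial.mapEquiv (Int.quotientSpanNatEquivZMod ℓ) :
          (ℤ ⧸ I)[X] →+* (ZMod ℓ)[X]) := by
    rw [Ideal.map_span, Set.image_singleton, hψf, Polynomial.map_map]
    have hcomp : ((Int.quotientSpanNatEquivZMod ℓ : (ℤ ⧸ I) →+* ZMod ℓ).comp
        (Ideal.Quotient.mk I)) = Int.castRingHom (ZMod ℓ) := Subsingleton.elim _ _
    rw [hcomp, hfZ]
    simp [Polynomial.map_sub, Polynomial.map_pow, map_natCast]
  have e4 : ((ℤ ⧸ I)[X] ⧸ Ideal.span {fZ.map (Ideal.Quotient.mk I)}) ≃+*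
      ((ZMod ℓ)[X] ⧸ Ideal.span {(X ^ p - C (N : ZMod ℓ) : (ZMod ℓ)[X])}) :=
    Ideal.quotientEquiv _ _ (Polynomial.mapEquiv (Int.quotientSpanNatEquivZMod ℓ)) hψeq
  exact ⟨((e1.symm.trans e2.symm).trans e3).trans e4⟩

open NumberField

set_option maxHeartbeats 2000000 in
set_option synthInstance.maxHeartbeats 1000000 in
/-- Splitting of a prime `ℓ ≠ p, N` in `F = ℚ(N^{1/p})`: let `r` be the multiplicative
order of `ℓ` modulo `p`. If `N` is not a `p`-th power mod `ℓ` then `ℓ` is inert in `F`.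
If `N` is a `p`-th power mod `ℓ` then there are exactly `(p-1)/r + 1` primes of `𝓞 F`
over `ℓ`, one of residue degree `1` (absolute norm `ℓ`) and all the others of residue
degree `r` (absolute norm `ℓ^r`). -/
theorem splitting_in_Q_Nth_root
    (N p ℓ : ℕ) (hN : N.Prime) (hp : p.Prime) (hl : ℓ.Prime) (hp5 : 5 ≤ p)
    (hNp : N ≠ p) (hlp : ℓ ≠ p) (hlN : ℓ ≠ N)
    (K : Type*) [Field K] [NumberField K] (α : K)
    (hroot : α ^ p = (N : K)) (hgen : Algebra.adjoin ℚ {α} = ⊤)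
    (r : ℕ) (hr : r = orderOf (ℓ : ZMod p)) :
    ((¬ ∃ b : ZMod ℓ, b ^ p = (N : ZMod ℓ)) →
      (Ideal.span {(ℓ : 𝓞 K)}).IsPrime) ∧
    ((∃ b : ZMod ℓ, b ^ p = (N : ZMod ℓ)) →
      Nat.card {P : Ideal (𝓞 K) // P.IsPrime ∧ (ℓ : 𝓞 K) ∈ P} = (p - 1) / r + 1 ∧
      ∃ P₀ : Ideal (𝓞 K), P₀.IsPrime ∧ (ℓ : 𝓞 K) ∈ P₀ ∧ Ideal.absNorm P₀ = ℓ ∧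
        ∀ P : Ideal (𝓞 K), P.IsPrime → (ℓ : 𝓞 K) ∈ P → P ≠ P₀ →
          Ideal.absNorm P = ℓ ^ r) := by
  haveI : Fact ℓ.Prime := ⟨hl⟩
  haveI : Fact p.Prime := ⟨hp⟩
  obtain ⟨e⟩ := setup_equiv N p ℓ hN hp hl hp5 hNp hlp hlN K α hroot hgen
  constructor
  · intro h
    push_neg at h
    have hirr : Irreducible (Polynomial.X ^ p - Polynomial.C ((N : ZMod ℓ))) :=
      X_pow_sub_C_irreducible_of_prime hp h
    have hprime : (Ideal.span {(Polynomial.X ^ p - Polynomial.C ((N : ZMod ℓ)) :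
        (Polynomial (ZMod ℓ)))}).IsPrime :=
      (Ideal.span_singleton_prime hirr.ne_zero).mpr hirr.prime
    haveI : IsDomain ((Polynomial (ZMod ℓ)) ⧸ Ideal.span
        {(Polynomial.X ^ p - Polynomial.C ((N : ZMod ℓ)) : Polynomial (ZMod ℓ))}) :=
      (Ideal.Quotient.isDomain_iff_prime _).mpr hprime
    haveI hdom : IsDomain (𝓞 K ⧸ Ideal.span {(ℓ : 𝓞 K)}) := MulEquiv.isDomain _ e.toMulEquiv
    exact (Ideal.Quotient.isDomain_iff_prime _).mp hdom
  · intro ⟨b, hb⟩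
    exact conclusion_part2 N p ℓ hN hp hl hp5 hNp hlp hlN K r hr e b hb
end

section
/- Let p and N be distinct primes and let ℓ be a prime not dividing Np. Suppose the image of N in the finite field F_ℓ is a p-th power, and let r be the multiplicative order of ℓ in (Z/pZ)^×. Then the polynomial x^p − N ∈ F_ℓ[x] is separable and factors as a product of exactly one monic linear polynomial and (p−1)/r pairwise distinct monic irreducible polynomials, each of degree r. -/
open Polynomial UniqueFactorizationMonoid

lemma key_deg (p ℓ : ℕ) (hp : p.Prime) (hl : ℓ.Prime) (hpl : ¬ p ∣ ℓ)
    (b : ZMod ℓ) (hb : b ≠ 0)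
    (r : ℕ) (hr : r = orderOf (ℓ : ZMod p))
    (g : (ZMod ℓ)[X]) (hg : Irreducible g) (hgm : g.Monic)
    (hdvd : g ∣ X ^ p - C (b ^ p)) (hne : g ≠ X - C b) :
    g.natDegree = r := by
  classical
  haveI := Fact.mk hp
  haveI := Fact.mk hl
  -- r is positive
  have hlu : IsUnit (ℓ : ZMod p) := by
    rw [ZMod.isUnit_iff_coprime]
    exact Nat.Coprime.symm (hp.coprime_iff_not_dvd.mpr hpl)
  have hr0 : r ≠ 0 := by
    rw [hr, ← hlu.unit_spec, orderOf_units]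
    exact (orderOf_pos hlu.unit).ne'
  set K := GaloisField ℓ r with hK
  haveI : Fintype K := Fintype.ofFinite K
  have hcardK : Fintype.card K = ℓ ^ r := by
    rw [← Nat.card_eq_fintype_card]; exact GaloisField.card ℓ r hr0
  have hfinrankK : Module.finrank (ZMod ℓ) K = r := GaloisField.finrank ℓ hr0
  set φ := algebraMap (ZMod ℓ) K with hφ
  -- p divides card Kˣ
  have hdvdcard : p ∣ Fintype.card Kˣ := by
    rw [Fintype.card_units, hcardK]
    have h1 : ((ℓ : ZMod p)) ^ r = 1 := by rw [hr]; exact pow_orderOf_eq_one _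
    have : ((ℓ ^ r - 1 : ℕ) : ZMod p) = 0 := by
      have hle : 1 ≤ ℓ ^ r := Nat.one_le_pow _ _ hl.pos
      push_cast [Nat.cast_sub hle]
      rw [h1]; ring
    exact (ZMod.natCast_eq_zero_iff _ _).mp this
  -- a primitive p-th root of unity in K
  obtain ⟨u, hu⟩ := exists_prime_orderOf_dvd_card p hdvdcard
  have hprim : IsPrimitiveRoot ((u : K)) p := by
    have h := IsPrimitiveRoot.orderOf (u : K)
    rwa [orderOf_units, hu] at h
  -- the polynomial splits in K
  have hbK : (φ b) ^ p = φ (b ^ p) := by rw [map_pow]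
  have hsplits : ((X ^ p - C (b ^ p) : (ZMod ℓ)[X]).map φ).Splits := by
    rw [Polynomial.map_sub, Polynomial.map_pow, map_X, map_C]
    exact X_pow_sub_C_splits_of_isPrimitiveRoot hprim hbK
  have hmapne : (X ^ p - C (b ^ p) : (ZMod ℓ)[X]).map φ ≠ 0 := by
    have : ((X ^ p - C (b ^ p) : (ZMod ℓ)[X])).Monic := monic_X_pow_sub_C _ hp.ne_zero
    exact (this.map φ).ne_zero
  have hgsplits : (g.map φ).Splits :=
    hsplits.of_dvd hmapne (Polynomial.map_dvd φ hdvd)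
  have hgdeg : g.degree ≠ 0 := by
    exact fun h => hg.not_isUnit (isUnit_iff_degree_eq_zero.mpr h)
  obtain ⟨α, hα⟩ := hgsplits.exists_eval_eq_zero
    (by rwa [degree_map])
  rw [eval_map] at hα
  have hαeval : aeval α g = 0 := by rwa [aeval_def]
  -- α^p = φ (b^p)
  have hαroot : α ^ p = φ (b ^ p) := by
    obtain ⟨q, hq⟩ := hdvd
    have h0 : eval α ((X ^ p - C (b ^ p) : (ZMod ℓ)[X]).map φ) = 0 := by
      rw [hq, Polynomial.map_mul, eval_mul, eval_map, hα, zero_mul]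
    rw [Polynomial.map_sub, Polynomial.map_pow, map_X, map_C, eval_sub, eval_pow, eval_X,
      eval_C, sub_eq_zero] at h0
    exact h0
  -- g is the minimal polynomial of α
  have hint : IsIntegral (ZMod ℓ) α := ⟨g, hgm, hαeval⟩
  have hgmin : g = minpoly (ZMod ℓ) α := minpoly.eq_of_irreducible_of_monic hg hαeval hgm
  -- α ≠ φ b
  have hαne : α ≠ φ b := by
    intro h
    apply hne
    have h2 : aeval α (X - C b : (ZMod ℓ)[X]) = 0 := by simp [h, hφ]
    rw [hgmin, ← minpoly.eq_of_irreducible_of_monic (Polynomial.irreducible_X_sub_C b) h2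
      (monic_X_sub_C b)]
  -- ζ := α / φ b has order p
  have hbK0 : φ b ≠ 0 := (map_ne_zero_iff φ (algebraMap (ZMod ℓ) K).injective).mpr hb
  set ζ : K := α * (φ b)⁻¹ with hζdef
  have hζp : ζ ^ p = 1 := by
    rw [hζdef, mul_pow, hαroot, ← hbK, inv_pow, mul_inv_cancel₀ (pow_ne_zero _ hbK0)]
  have hζne : ζ ≠ 1 := by
    rw [hζdef]
    intro h
    exact hαne (by rwa [mul_inv_eq_one₀ hbK0] at h)
  have hζord : orderOf ζ = p := orderOf_eq_prime hζp hζne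
  -- ζ lies in the intermediate field generated by α
  set E := IntermediateField.adjoin (ZMod ℓ) {α} with hE
  have hαE : α ∈ E := IntermediateField.mem_adjoin_simple_self (ZMod ℓ) α
  have hζE : ζ ∈ E := mul_mem hαE (E.inv_mem (E.algebraMap_mem b))
  set d := Module.finrank (ZMod ℓ) E with hd
  have hdeg : g.natDegree = d := by
    rw [hgmin, hd, IntermediateField.adjoin.finrank hint]
  -- d divides r
  have hdr : d ∣ r := by
    refine ⟨Module.finrank E K, ?_⟩
    rw [hd, Module.finrank_mul_finrank, hfinrankK]
  -- r divides d
  haveI : Fintype E := Fintype.ofFinite E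
  have hcardE : Fintype.card E = ℓ ^ d := by
    rw [Module.card_eq_pow_finrank (K := ZMod ℓ) (V := E), ZMod.card]
  have hζ'ord : orderOf (⟨ζ, hζE⟩ : E) = p := by
    rw [← hζord]
    exact (orderOf_injective (algebraMap E K).toMonoidHom
      (algebraMap E K).injective (⟨ζ, hζE⟩ : E)).symm
  have hζ'0 : (⟨ζ, hζE⟩ : E) ≠ 0 := by
    intro h
    apply one_ne_zero (α := K)
    rw [← hζp]
    have : ζ = 0 := congrArg Subtype.val h
    rw [this, zero_pow hp.ne_zero]
  have hζ'unit : IsUnit (⟨ζ, hζE⟩ : E) := isUnit_iff_ne_zero.mpr hζ'0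
  have hdvd2 : p ∣ Fintype.card Eˣ := by
    rw [← hζ'ord, ← hζ'unit.unit_spec, orderOf_units]
    exact orderOf_dvd_card
  have hrd : r ∣ d := by
    rw [Fintype.card_units, hcardE] at hdvd2
    have h1 : ((ℓ ^ d - 1 : ℕ) : ZMod p) = 0 := (ZMod.natCast_eq_zero_iff _ _).mpr hdvd2
    have hle : 1 ≤ ℓ ^ d := Nat.one_le_pow _ _ hl.pos
    rw [Nat.cast_sub hle, sub_eq_zero] at h1
    rw [hr]
    apply orderOf_dvd_of_pow_eq_one
    push_cast at h1
    exact h1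
  rw [hdeg]
  exact Nat.dvd_antisymm hdr hrd


/-- Let `p, N, ℓ` be primes with `p ≠ N` and `ℓ ∤ Np`, suppose `N` is a `p`-th power in
`𝔽_ℓ`, and let `r` be the multiplicative order of `ℓ` mod `p`. Then `x^p - N ∈ 𝔽_ℓ[x]` is
separable and factors as the product of exactly one monic linear polynomial and
`(p-1)/r` pairwise distinct monic irreducible polynomials, each of degree `r`. -/
theorem factorization_xp_sub_N_mod_l
    (p N ℓ : ℕ) (hp : p.Prime) (hN : N.Prime) (hl : ℓ.Prime) (hpN : p ≠ N)
    (hdvd : ¬ ℓ ∣ N * p) (hpow : ∃ b : ZMod ℓ, b ^ p = (N : ZMod ℓ))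
    (r : ℕ) (hr : r = orderOf (ℓ : ZMod p)) :
    (X ^ p - C (N : ZMod ℓ)).Separable ∧
    ∃ (c : ZMod ℓ) (g : Fin ((p - 1) / r) → (ZMod ℓ)[X]),
      X ^ p - C (N : ZMod ℓ) = (X - C c) * ∏ i, g i ∧
      (∀ i, (g i).Monic ∧ Irreducible (g i) ∧ (g i).natDegree = r) ∧
      Function.Injective g := by
  classical
  haveI := Fact.mk hl
  have hlN : ¬ ℓ ∣ N := fun h => hdvd (h.mul_right p)
  have hlp : ¬ ℓ ∣ p := fun h => hdvd (h.mul_left N)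
  have hN0 : (N : ZMod ℓ) ≠ 0 := fun h => hlN ((ZMod.natCast_eq_zero_iff _ _).mp h)
  have hp0 : (p : ZMod ℓ) ≠ 0 := fun h => hlp ((ZMod.natCast_eq_zero_iff _ _).mp h)
  have hsep : (X ^ p - C (N : ZMod ℓ)).Separable := separable_X_pow_sub_C _ hp0 hN0
  refine ⟨hsep, ?_⟩
  obtain ⟨b, hb⟩ := hpow
  have hb0 : b ≠ 0 := fun h => hN0 (by rw [← hb, h, zero_pow hp.ne_zero])
  set f : (ZMod ℓ)[X] := X ^ p - C (N : ZMod ℓ) with hf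
  have hfm : f.Monic := monic_X_pow_sub_C _ hp.ne_zero
  have hf0 : f ≠ 0 := hfm.ne_zero
  have hfb : f = X ^ p - C (b ^ p) := by rw [hf, hb]
  have hlnep : ℓ ≠ p := fun h => hlp (h ▸ dvd_refl ℓ)
  have hpl : ¬ p ∣ ℓ := fun h => hlnep ((Nat.prime_dvd_prime_iff_eq hp hl).mp h).symm
  -- the normalized factors of f
  set M := normalizedFactors f with hM
  have hnodup : M.Nodup := (squarefree_iff_nodup_normalizedFactors hf0).mp hsep.squarefree
  have hMmonic : ∀ q ∈ M, q.Monic := by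
    intro q hq
    have h1 := normalize_normalized_factor q hq
    have h2 : q ≠ 0 := (irreducible_of_normalized_factor q hq).ne_zero
    rw [← h1]
    exact Polynomial.monic_normalize h2
  have hprod : M.prod = f := by
    apply Polynomial.eq_of_monic_of_associated ?_ hfm (prod_normalizedFactors hf0)
    have := monic_multiset_prod_of_monic M id hMmonic
    rwa [Multiset.map_id] at this
  -- X - C b is one of the factors
  have hdvdXb : (X - C b) ∣ f := by
    rw [dvd_iff_isRoot]
    simp [hf, IsRoot, hb]
  have hmem : (X - C b) ∈ M := by
    obtain ⟨q, hqmem, hassoc⟩ := exists_mem_normalizedFactors_of_dvd hf0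
      (Polynomial.irreducible_X_sub_C b) hdvdXb
    rwa [Polynomial.eq_of_monic_of_associated (monic_X_sub_C b) (hMmonic q hqmem) hassoc]
  set M' := M.erase (X - C b) with hM'
  have hcons : M = (X - C b) ::ₘ M' := (Multiset.cons_erase hmem).symm
  have hfactor : f = (X - C b) * M'.prod := by rw [← hprod, hcons, Multiset.prod_cons]
  have hnotmem : (X - C b) ∉ M' := hnodup.notMem_erase
  have hM'nodup : M'.Nodup := hnodup.erase _
  have hM'monic : ∀ q ∈ M', q.Monic := fun q hq => hMmonic q (Multiset.mem_of_mem_erase hq)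
  have hM'prop : ∀ q ∈ M', q.Monic ∧ Irreducible q ∧ q.natDegree = r := by
    intro q hq
    have hqM : q ∈ M := Multiset.mem_of_mem_erase hq
    have hmon := hMmonic q hqM
    have hirr := irreducible_of_normalized_factor q hqM
    have hqne : q ≠ X - C b := fun h => hnotmem (h ▸ hq)
    have hqdvd : q ∣ X ^ p - C (b ^ p) := hfb ▸ dvd_of_mem_normalizedFactors hqM
    exact ⟨hmon, hirr, key_deg p ℓ hp hl hpl b hb0 r hr q hirr hmon hqdvd hqne⟩
  -- degree count
  have hdegsum : p = 1 + Multiset.card M' * r := by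
    have h1 : f.natDegree = p := by rw [hf]; exact natDegree_X_pow_sub_C
    have h2 : (M'.map natDegree).sum = Multiset.card M' * r := by
      have : M'.map natDegree = Multiset.replicate (Multiset.card M') r := by
        rw [Multiset.eq_replicate]
        constructor
        · rw [Multiset.card_map]
        · intro x hx
          obtain ⟨q, hq, rfl⟩ := Multiset.mem_map.mp hx
          exact (hM'prop q hq).2.2
      rw [this, Multiset.sum_replicate, smul_eq_mul]
    have h3 : f.natDegree = 1 + (M'.map natDegree).sum := by
      have hm : M'.prod.Monic := by
        have := monic_multiset_prod_of_monic M' id (by simpa using hM'monic)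
        rwa [Multiset.map_id] at this
      rw [hfactor, natDegree_mul (X_sub_C_ne_zero b) hm.ne_zero, natDegree_X_sub_C]
      congr 1
      have := natDegree_multiset_prod_of_monic M' hM'monic
      exact this
    rw [← h1, h3, h2]
  have hr0 : r ≠ 0 := by
    intro h
    rw [h, mul_zero] at hdegsum
    have := hp.one_lt
    omega
  have hcard : Multiset.card M' = (p - 1) / r := by
    have h1 : p - 1 = Multiset.card M' * r := by omega
    rw [h1, Nat.mul_div_cancel _ (Nat.pos_of_ne_zero hr0)]
  -- enumerate the factors
  set s : Finset (ZMod ℓ)[X] := M'.toFinset with hs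
  have hsval : s.val = M' := by
    rw [hs, Multiset.toFinset_val, hM'nodup.dedup]
  have hscard : (p - 1) / r = s.card := by
    rw [← hcard, Finset.card_def, hsval]
  let e : Fin ((p - 1) / r) ≃ {x // x ∈ s} := (finCongr hscard).trans s.equivFin.symm
  refine ⟨b, fun i => (e i : (ZMod ℓ)[X]), ?_, ?_, ?_⟩
  · rw [hfactor]
    congr 1
    refine Eq.symm ?_
    calc ∏ i, ((e i : (ZMod ℓ)[X])) = ∏ x : {x // x ∈ s}, (x : (ZMod ℓ)[X]) :=
        Equiv.prod_comp e _
    _ = ∏ x ∈ s, x := Finset.prod_coe_sort s id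
    _ = M'.prod := by
        rw [Finset.prod_eq_multiset_prod, hsval]
        simp [Multiset.map_id']
  · intro i
    have : ((e i : (ZMod ℓ)[X])) ∈ M' := by
      rw [← hsval]
      exact (e i).2
    exact hM'prop _ this
  · intro i j hij
    exact e.injective (Subtype.ext hij)
end
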